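/- arXiv:2405.07107 — 2 statements merged into one kernel-verified Lean document; each statement's English description precedes it below -/
import Mathlib

section
/- Networks 1 and 2 imply that S(Y_i; U) =ι S(Z_i; U) =ι S(X_i^j; U) =ι T_i for every i ∈ {1,…,n} and j ∈ {1,…,k}; that is, for every joint distribution of the variables U_i, Y_i, Z_i, X_i^j satisfying both Network 1 and Network 2, the minimal sufficient statistics of Y_i, of Z_i, and of each X_i^j for U are all informationally equivalent to T_i = S((X_i^1,…,X_i^k, Y_i, Z_i); U). -/
namespace Paper

/-- The probability of an event under a probability mass function. -/
noncomputable def pr {Ω : Type} (μ : PMF Ω) (E : Set Ω) : ENNReal :=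
  μ.toOuterMeasure E

/-- Conditional independence `X ⊥⊥ Y | Z`:
`p(x,y,z) p(z) = p(x,z) p(y,z)` for all `x, y, z`. -/
def CondIndep {Ω α β γ : Type} (μ : PMF Ω) (X : Ω → α) (Y : Ω → β) (Z : Ω → γ) : Prop :=
  ∀ (x : α) (y : β) (z : γ),
    pr μ {ω | X ω = x ∧ Y ω = y ∧ Z ω = z} * pr μ {ω | Z ω = z}
      = pr μ {ω | X ω = x ∧ Z ω = z} * pr μ {ω | Y ω = y ∧ Z ω = z}

/-- Unconditional independence `X ⊥⊥ Y`. -/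
def Indep {Ω α β : Type} (μ : PMF Ω) (X : Ω → α) (Y : Ω → β) : Prop :=
  ∀ (x : α) (y : β),
    pr μ {ω | X ω = x ∧ Y ω = y} = pr μ {ω | X ω = x} * pr μ {ω | Y ω = y}

/-- `X ≥ι Y`: `X` functionally determines `Y` (with probability one). -/
def FunDep {Ω α β : Type} (μ : PMF Ω) (X : Ω → α) (Y : Ω → β) : Prop :=
  ∃ f : α → β, ∀ ω ∈ μ.support, Y ω = f (X ω)

/-- `X =ι Y`: informational equivalence. -/
def InfoEq {Ω α β : Type} (μ : PMF Ω) (X : Ω → α) (Y : Ω → β) : Prop :=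
  FunDep μ X Y ∧ FunDep μ Y X

/-- The random variable `X` has finite support. -/
def FinSupp {Ω α : Type} (μ : PMF Ω) (X : Ω → α) : Prop :=
  (X '' μ.support).Finite

/-- The random variable `X` has support of cardinality at most `ℓ`. -/
def CardLE {Ω α : Type} (μ : PMF Ω) (X : Ω → α) (ℓ : ℕ) : Prop :=
  ∃ s : Finset α, s.card ≤ ℓ ∧ ∀ ω ∈ μ.support, X ω ∈ s

/-- `X` is uniformly distributed with support of cardinality `ℓ`. -/
def UniformCard {Ω α : Type} (μ : PMF Ω) (X : Ω → α) (ℓ : ℕ) : Prop :=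
  ∃ S : Finset α, S.card = ℓ ∧ (∀ x ∈ S, pr μ {ω | X ω = x} = (ℓ : ENNReal)⁻¹) ∧
    ∀ x, x ∉ S → pr μ {ω | X ω = x} = 0

/-- The probability mass function of the random variable `X`. -/
noncomputable def distOf {Ω α : Type} (μ : PMF Ω) (X : Ω → α) : α → ENNReal :=
  fun x => pr μ {ω | X ω = x}

/-- `p ⪰ q` : `p` majorizes `q`, i.e. for every `k`, the sum of the `k` largest values
of `p` is at least the sum of the `k` largest values of `q`. -/
def Majorizes (p q : ℕ → ENNReal) : Prop :=
  ∀ s : Finset ℕ, ∃ t : Finset ℕ, t.card ≤ s.card ∧ ∑ x ∈ s, q x ≤ ∑ x ∈ t, p x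

/-- `T` is a sufficient statistic of `X` for `U`: `X ≥ι T` and `U ⊥⊥ X | T`. -/
def SuffStat {Ω α β γ : Type} (μ : PMF Ω) (X : Ω → α) (U : Ω → β) (T : Ω → γ) : Prop :=
  FunDep μ X T ∧ CondIndep μ U X T

/-- `T` is a minimal sufficient statistic of `X` for `U`. -/
def MinSuffStat {Ω α β γ : Type} (μ : PMF Ω) (X : Ω → α) (U : Ω → β) (T : Ω → γ) : Prop :=
  SuffStat μ X U T ∧
    ∀ (δ : Type) (T' : Ω → δ), SuffStat μ X U T' → FunDep μ T' T

/-- Mutual independence of the subfamily `(V i)_{i ∈ s}`: each `V i` (for `i ∈ s`) is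
independent of the joint variable of the others. -/
def MutIndepOn {Ω ι : Type} {β : ι → Type} (μ : PMF Ω) (V : ∀ i, Ω → β i)
    (s : Finset ι) : Prop :=
  ∀ i ∈ s, Indep μ (V i) (fun ω => fun j : {j // j ∈ s ∧ j ≠ i} => V j.1 ω)

/-- Mutual independence of the whole family `(V i)_i`. -/
def MutIndep {Ω ι : Type} {β : ι → Type} (μ : PMF Ω) (V : ∀ i, Ω → β i) : Prop :=
  ∀ i, Indep μ (V i) (fun ω => fun j : {j // j ≠ i} => V j.1 ω)

/-- Mutual independence of `(V i)_{i ∈ C}` for a list `C` of indices. -/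
def MutIndepL {Ω : Type} (μ : PMF Ω) (V : ℕ → Ω → ℕ) (C : List ℕ) : Prop :=
  ∀ i ∈ C, Indep μ (V i) (fun ω => fun j : {j // j ∈ C ∧ j ≠ i} => V j.1 ω)

/-- The joint random variable `(X a)_{a ∈ A}` for a list `A` of indices. -/
def jointOn {Ω : Type} (X : ℕ → Ω → ℕ) (A : List ℕ) : Ω → ({a : ℕ // a ∈ A} → ℕ) :=
  fun ω a => X a.1 ω

/-- The joint random variable `(T i)_{i ∈ S}` for a finset `S` of indices. -/
def jointFin {Ω ι : Type} {β : ι → Type} (T : ∀ i, Ω → β i) (S : Finset ι) :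
    Ω → ((i : {i // i ∈ S}) → β i.1) :=
  fun ω i => T i.1 ω

/-- The set of parents (in-neighbours) of `w` in the directed graph with edge relation `E`. -/
def parentSet {ν : Type} (E : ν → ν → Prop) (w : ν) : Set ν := {v | E v w}

/-- The set of nodes that are neither descendants nor parents of `w`. -/
def nonDescSet {ν : Type} (E : ν → ν → Prop) (w : ν) : Set ν :=
  {v | ¬ Relation.ReflTransGen E w v ∧ ¬ E v w}

/-- The collection of random variables `(X v)_v` satisfies the Bayesian network structure
with edge relation `E`: each variable is conditionally independent of its
non-descendant non-parent variables given its parent variables. -/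
def SatisfiesBN {Ω ν : Type} {β : ν → Type} (μ : PMF Ω) (X : ∀ v, Ω → β v)
    (E : ν → ν → Prop) : Prop :=
  ∀ w : ν, CondIndep μ (X w)
    (fun ω => fun v : nonDescSet E w => X v.1 ω)
    (fun ω => fun v : parentSet E w => X v.1 ω)

/-- `E` is (the edge list of) a directed acyclic graph on the nodes `{0, …, n-1}`. -/
def IsDAG (n : ℕ) (E : List (ℕ × ℕ)) : Prop :=
  (∀ e ∈ E, e.1 < n ∧ e.2 < n) ∧
    ∀ i : ℕ, ¬ Relation.TransGen (fun a c => (a, c) ∈ E) i i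

/-- The edge relation on `Fin n` determined by an edge list. -/
def edgeRelOn (n : ℕ) (E : List (ℕ × ℕ)) : Fin n → Fin n → Prop :=
  fun i j => ((i : ℕ), (j : ℕ)) ∈ E

/-- `(X_0, …, X_{n-1})` satisfies the Bayesian network given by the edge list `E`. -/
def SatisfiesBNn {Ω : Type} (μ : PMF Ω) (n : ℕ) (X : ℕ → Ω → ℕ)
    (E : List (ℕ × ℕ)) : Prop :=
  SatisfiesBN μ (fun i : Fin n => X (i : ℕ)) (edgeRelOn n E)

/-- `(A, C, B) ∈ I(G_1, …, G_m)`: every collection of finitely supported discrete random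
variables satisfying all the network structures in `Gs` satisfies `X_A ⊥⊥ X_B | X_C`. -/
def ImpliedCI (n : ℕ) (Gs : List (List (ℕ × ℕ))) (A C B : List ℕ) : Prop :=
  ∀ (Ω : Type) (μ : PMF Ω) (X : ℕ → Ω → ℕ),
    (∀ i, i < n → FinSupp μ (X i)) →
    (∀ G ∈ Gs, SatisfiesBNn μ n X G) →
    CondIndep μ (jointOn X A) (jointOn X B) (jointOn X C)

/-- Two lists are disjoint as sets. -/
def DisjointL (A B : List ℕ) : Prop := ∀ a ∈ A, a ∉ B

end Paper
namespace Paper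

/-- The nodes of the two networks: `u i = U_i`, `y i = Y_i`, `z i = Z_i`,
`x i j = X_i^j`. -/
inductive BNode (n k : ℕ) : Type
  | u : Fin n → BNode n k
  | y : Fin n → BNode n k
  | z : Fin n → BNode n k
  | x : Fin n → Fin k → BNode n k

/-- Edge relation of Network 1: `U_i → U_{i'}` for `i ∈ C1, i' ∉ C1` and for
`i, i' ∉ C1` with `i < i'`; and `U_i → Y_i → X_i^1 → ⋯ → X_i^k → Z_i`. -/
def edge1 (n k : ℕ) (C1 : Finset (Fin n)) : BNode n k → BNode n k → Prop :=
  fun v w => match v, w with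
  | .u i, .u i' => (i ∈ C1 ∧ i' ∉ C1) ∨ (i ∉ C1 ∧ i' ∉ C1 ∧ i < i')
  | .u i, .y i' => i = i'
  | .y i, .x i' j => i = i' ∧ (j : ℕ) = 0
  | .x i j, .x i' j' => i = i' ∧ (j' : ℕ) = (j : ℕ) + 1
  | .x i j, .z i' => i = i' ∧ (j : ℕ) = k - 1
  | _, _ => False

/-- Edge relation of Network 2: `U_i → U_{i'}` for `i ∈ C2, i' ∉ C2` and for
`i, i' ∉ C2` with `i < i'`; `U_i → Z_i → Y_i`; `U_i → X_i^j` for `i ≠ b j`; and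
`X_i^j → X_{b_j}^j` for `i ∈ A j`. -/
def edge2 (n k : ℕ) (C2 : Finset (Fin n)) (A : Fin k → Finset (Fin n))
    (b : Fin k → Fin n) : BNode n k → BNode n k → Prop :=
  fun v w => match v, w with
  | .u i, .u i' => (i ∈ C2 ∧ i' ∉ C2) ∨ (i ∉ C2 ∧ i' ∉ C2 ∧ i < i')
  | .u i, .z i' => i = i'
  | .z i, .y i' => i = i'
  | .u i, .x i' j => i = i' ∧ i' ≠ b j
  | .x i j, .x i' j' => j = j' ∧ i' = b j ∧ i ∈ A j
  | _, _ => False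

/-- The joint random variable `U = (U_1, …, U_n)`. -/
def Ujoint {Ω : Type} {n k : ℕ} (X : BNode n k → Ω → ℕ) : Ω → (Fin n → ℕ) :=
  fun ω i => X (.u i) ω

/-- The joint random variable `((X_i^j)_{j=1}^k, Y_i, Z_i)`. -/
def tupleVar {Ω : Type} {n k : ℕ} (X : BNode n k → Ω → ℕ) (i : Fin n) :
    Ω → ((Fin k → ℕ) × ℕ × ℕ) :=
  fun ω => (fun j => X (.x i j) ω, X (.y i) ω, X (.z i) ω)

end Paper
namespace Paper


section AuxProb
variable {Ω : Type} {μ : PMF Ω}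

theorem pr_apply (E : Set Ω) : pr μ E = ∑' ω, E.indicator μ ω :=
  PMF.toOuterMeasure_apply μ E

theorem pr_congr {E F : Set Ω} (h : ∀ ω ∈ μ.support, (ω ∈ E ↔ ω ∈ F)) :
    pr μ E = pr μ F := by
  rw [pr_apply, pr_apply]
  refine tsum_congr fun ω => ?_
  by_cases hω : ω ∈ μ.support
  · by_cases hE : ω ∈ E
    · rw [Set.indicator_of_mem hE, Set.indicator_of_mem ((h ω hω).1 hE)]
    · rw [Set.indicator_of_notMem hE,
        Set.indicator_of_notMem (fun hF => hE ((h ω hω).2 hF))]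
  · have : μ ω = 0 := by simpa [PMF.mem_support_iff] using hω
    by_cases hE : ω ∈ E <;> by_cases hF : ω ∈ F <;>
      simp [Set.indicator_apply, hE, hF, this]

theorem pr_empty : pr μ (∅ : Set Ω) = 0 := μ.toOuterMeasure.empty

theorem pr_mono {E F : Set Ω} (h : E ⊆ F) : pr μ E ≤ pr μ F :=
  μ.toOuterMeasure.mono h

theorem pr_le_one (E : Set Ω) : pr μ E ≤ 1 := by
  rw [pr_apply]
  calc ∑' ω, E.indicator μ ω ≤ ∑' ω, μ ω :=
        ENNReal.tsum_le_tsum fun ω => Set.indicator_le_self E μ ω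
    _ = 1 := μ.tsum_coe

theorem pr_ne_top (E : Set Ω) : pr μ E ≠ ⊤ :=
  ((pr_le_one E).trans_lt ENNReal.one_lt_top).ne

theorem pr_ne_zero_of_mem {E : Set Ω} {ω : Ω} (hω : ω ∈ μ.support) (hE : ω ∈ E) :
    pr μ E ≠ 0 := by
  rw [pr_apply]
  intro h
  have h2 : E.indicator μ ω ≤ 0 := h ▸ ENNReal.le_tsum ω
  rw [Set.indicator_of_mem hE] at h2
  exact hω (le_antisymm h2 zero_le)

theorem pr_partition {α : Type} (V : Ω → α) (E : Set Ω) :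
    pr μ E = ∑' a, pr μ (E ∩ {ω | V ω = a}) := by
  simp only [pr_apply]
  rw [ENNReal.tsum_comm]
  refine tsum_congr fun ω => ?_
  rw [tsum_eq_single (V ω) (fun a ha => Set.indicator_of_notMem (fun h => ha h.2.symm) μ)]
  by_cases hE : ω ∈ E
  · rw [Set.indicator_of_mem hE,
      Set.indicator_of_mem (show ω ∈ E ∩ {ω' | V ω' = V ω} from ⟨hE, rfl⟩)]
  · rw [Set.indicator_of_notMem hE, Set.indicator_of_notMem (fun h => hE h.1)]

theorem pr_partition' {α : Type} (V : Ω → α) (P : Ω → Prop) :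
    pr μ {ω | P ω} = ∑' a, pr μ {ω | P ω ∧ V ω = a} := by
  rw [pr_partition V]
  exact tsum_congr fun a => rfl

/-- cancel a common nonzero finite factor on the right -/
theorem ennreal_cancel {a b x : ENNReal} (hx0 : x ≠ 0) (hxt : x ≠ ⊤) (h : a * x = b * x) :
    a = b := by
  have h2 := congrArg (· * x⁻¹) h
  simpa [mul_assoc, ENNReal.mul_inv_cancel hx0 hxt] using h2

section CI
variable {α β γ δ α' β' γ' : Type} {A : Ω → α} {B : Ω → β} {C : Ω → γ} {D : Ω → δ}

theorem CondIndep.symm (h : CondIndep μ A B C) : CondIndep μ B A C := by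
  intro b a c
  have e : {ω | B ω = b ∧ A ω = a ∧ C ω = c} = {ω | A ω = a ∧ B ω = b ∧ C ω = c} := by
    ext ω; simp only [Set.mem_setOf_eq]; tauto
  rw [e, h a b c, mul_comm]

theorem CondIndep.margB {B' : Ω → β'} (g : β → β') (hg : ∀ ω, B' ω = g (B ω))
    (h : CondIndep μ A B C) : CondIndep μ A B' C := by
  intro a b' c
  have key : ∀ b, pr μ {ω | (A ω = a ∧ B' ω = b' ∧ C ω = c) ∧ B ω = b} * pr μ {ω | C ω = c}
      = pr μ {ω | A ω = a ∧ C ω = c} * pr μ {ω | (B' ω = b' ∧ C ω = c) ∧ B ω = b} := by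
    intro b
    by_cases hgb : g b = b'
    · have e1 : {ω | (A ω = a ∧ B' ω = b' ∧ C ω = c) ∧ B ω = b}
          = {ω | A ω = a ∧ B ω = b ∧ C ω = c} := by
        ext ω; simp only [Set.mem_setOf_eq, hg ω]
        constructor
        · rintro ⟨⟨h1, h2, h3⟩, h4⟩; exact ⟨h1, h4, h3⟩
        · rintro ⟨h1, h2, h3⟩; exact ⟨⟨h1, by rw [h2, hgb], h3⟩, h2⟩
      have e2 : {ω | (B' ω = b' ∧ C ω = c) ∧ B ω = b} = {ω | B ω = b ∧ C ω = c} := by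
        ext ω; simp only [Set.mem_setOf_eq, hg ω]
        constructor
        · rintro ⟨⟨h2, h3⟩, h4⟩; exact ⟨h4, h3⟩
        · rintro ⟨h2, h3⟩; exact ⟨⟨by rw [h2, hgb], h3⟩, h2⟩
      rw [e1, e2]; exact h a b c
    · have e1 : {ω | (A ω = a ∧ B' ω = b' ∧ C ω = c) ∧ B ω = b} = (∅ : Set Ω) := by
        ext ω; simp only [Set.mem_setOf_eq, hg ω, Set.mem_empty_iff_false, iff_false]
        rintro ⟨⟨h1, h2, h3⟩, h4⟩; exact hgb (h4 ▸ h2)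
      have e2 : {ω | (B' ω = b' ∧ C ω = c) ∧ B ω = b} = (∅ : Set Ω) := by
        ext ω; simp only [Set.mem_setOf_eq, hg ω, Set.mem_empty_iff_false, iff_false]
        rintro ⟨⟨h2, h3⟩, h4⟩; exact hgb (h4 ▸ h2)
      rw [e1, e2, pr_empty, zero_mul, mul_zero]
  calc pr μ {ω | A ω = a ∧ B' ω = b' ∧ C ω = c} * pr μ {ω | C ω = c}
      = (∑' b, pr μ {ω | (A ω = a ∧ B' ω = b' ∧ C ω = c) ∧ B ω = b}) * pr μ {ω | C ω = c} := by
        rw [← pr_partition' B]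
    _ = ∑' b, pr μ {ω | (A ω = a ∧ B' ω = b' ∧ C ω = c) ∧ B ω = b} * pr μ {ω | C ω = c} :=
        ENNReal.tsum_mul_right.symm
    _ = ∑' b, pr μ {ω | A ω = a ∧ C ω = c} * pr μ {ω | (B' ω = b' ∧ C ω = c) ∧ B ω = b} :=
        tsum_congr key
    _ = pr μ {ω | A ω = a ∧ C ω = c} * ∑' b, pr μ {ω | (B' ω = b' ∧ C ω = c) ∧ B ω = b} :=
        ENNReal.tsum_mul_left
    _ = pr μ {ω | A ω = a ∧ C ω = c} * pr μ {ω | B' ω = b' ∧ C ω = c} := by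
        rw [← pr_partition' B]

theorem CondIndep.margA {A' : Ω → α'} (g : α → α') (hg : ∀ ω, A' ω = g (A ω))
    (h : CondIndep μ A B C) : CondIndep μ A' B C :=
  (h.symm.margB g hg).symm

theorem CondIndep.congr₃ {C' : Ω → γ} (hC : ∀ ω, C ω = C' ω) (h : CondIndep μ A B C) :
    CondIndep μ A B C' := by
  intro a b c
  have e0 : {ω | C' ω = c} = {ω | C ω = c} := by
    ext ω; simp only [Set.mem_setOf_eq, ← hC ω]
  have e1 : {ω | A ω = a ∧ B ω = b ∧ C' ω = c} = {ω | A ω = a ∧ B ω = b ∧ C ω = c} := by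
    ext ω; simp only [Set.mem_setOf_eq, ← hC ω]
  have e2 : {ω | A ω = a ∧ C' ω = c} = {ω | A ω = a ∧ C ω = c} := by
    ext ω; simp only [Set.mem_setOf_eq, ← hC ω]
  have e3 : {ω | B ω = b ∧ C' ω = c} = {ω | B ω = b ∧ C ω = c} := by
    ext ω; simp only [Set.mem_setOf_eq, ← hC ω]
  rw [e0, e1, e2, e3]
  exact h a b c

theorem CondIndep.congr₁ {A' : Ω → α} (hA : ∀ ω, A ω = A' ω) (h : CondIndep μ A B C) :
    CondIndep μ A' B C :=
  h.margA id (fun ω => (hA ω).symm)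

theorem CondIndep.congr₂ {B' : Ω → β} (hB : ∀ ω, B ω = B' ω) (h : CondIndep μ A B C) :
    CondIndep μ A B' C :=
  h.margB id (fun ω => (hB ω).symm)

theorem CondIndep.recodeC (g : γ → γ') (h' : γ' → γ) (hgh : ∀ ω, h' (g (C ω)) = C ω)
    (h : CondIndep μ A B C) : CondIndep μ A B (fun ω => g (C ω)) := by
  intro a b c'
  by_cases hne : ∃ ω₀, g (C ω₀) = c'
  · obtain ⟨ω₀, hω₀⟩ := hne
    have hiff : ∀ ω, g (C ω) = c' ↔ C ω = h' c' := by
      intro ω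
      constructor
      · intro hgc; rw [← hgc, hgh ω]
      · intro hc; rw [hc, ← hω₀, hgh ω₀, hω₀]
    have e1 : {ω | A ω = a ∧ B ω = b ∧ g (C ω) = c'} = {ω | A ω = a ∧ B ω = b ∧ C ω = h' c'} := by
      ext ω; simp only [Set.mem_setOf_eq, hiff ω]
    have e2 : {ω | g (C ω) = c'} = {ω | C ω = h' c'} := by
      ext ω; simp only [Set.mem_setOf_eq, hiff ω]
    have e3 : {ω | A ω = a ∧ g (C ω) = c'} = {ω | A ω = a ∧ C ω = h' c'} := by
      ext ω; simp only [Set.mem_setOf_eq, hiff ω]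
    have e4 : {ω | B ω = b ∧ g (C ω) = c'} = {ω | B ω = b ∧ C ω = h' c'} := by
      ext ω; simp only [Set.mem_setOf_eq, hiff ω]
    rw [e1, e2, e3, e4]
    exact h a b (h' c')
  · push_neg at hne
    have e2 : {ω | g (C ω) = c'} = (∅ : Set Ω) := by
      ext ω; simp only [Set.mem_setOf_eq, Set.mem_empty_iff_false, iff_false]; exact hne ω
    have e4 : {ω | B ω = b ∧ g (C ω) = c'} = (∅ : Set Ω) := by
      ext ω; simp only [Set.mem_setOf_eq, Set.mem_empty_iff_false, iff_false]
      rintro ⟨-, h2⟩; exact hne ω h2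
    rw [e2, e4, pr_empty, mul_zero, mul_zero]

theorem CondIndep.bundle {γW : Type} {W : Ω → γW} (fB : γW → β) (fC : γW → γ)
    (hB : ∀ ω, B ω = fB (W ω)) (hC : ∀ ω, C ω = fC (W ω))
    (hinj : ∀ w w', fB w = fB w' → fC w = fC w' → w = w')
    (h : CondIndep μ A B C) : CondIndep μ A W C := by
  intro a w c
  by_cases hcw : fC w = c
  · have e1 : {ω | A ω = a ∧ W ω = w ∧ C ω = c} = {ω | A ω = a ∧ B ω = fB w ∧ C ω = c} := by
      ext ω; simp only [Set.mem_setOf_eq, hB ω, hC ω]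
      constructor
      · rintro ⟨h1, h2, h3⟩; exact ⟨h1, by rw [h2], h3⟩
      · rintro ⟨h1, h2, h3⟩
        exact ⟨h1, hinj _ _ h2 (by rw [h3, hcw]), h3⟩
    have e2 : {ω | W ω = w ∧ C ω = c} = {ω | B ω = fB w ∧ C ω = c} := by
      ext ω; simp only [Set.mem_setOf_eq, hB ω, hC ω]
      constructor
      · rintro ⟨h2, h3⟩; exact ⟨by rw [h2], h3⟩
      · rintro ⟨h2, h3⟩; exact ⟨hinj _ _ h2 (by rw [h3, hcw]), h3⟩
    rw [e1, e2]; exact h a (fB w) c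
  · have e1 : {ω | A ω = a ∧ W ω = w ∧ C ω = c} = (∅ : Set Ω) := by
      ext ω; simp only [Set.mem_setOf_eq, Set.mem_empty_iff_false, iff_false]
      rintro ⟨-, h2, h3⟩; exact hcw (by rw [← h2, ← hC ω, h3])
    have e2 : {ω | W ω = w ∧ C ω = c} = (∅ : Set Ω) := by
      ext ω; simp only [Set.mem_setOf_eq, Set.mem_empty_iff_false, iff_false]
      rintro ⟨h2, h3⟩; exact hcw (by rw [← h2, ← hC ω, h3])
    rw [e1, e2, pr_empty, zero_mul, mul_zero]

theorem CondIndep.weakUnion (h : CondIndep μ A (fun ω => (B ω, C ω)) D) :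
    CondIndep μ A B (fun ω => (C ω, D ω)) := by
  rintro a b ⟨c, d⟩
  have hm : CondIndep μ A C D := h.margB Prod.snd (fun ω => rfl)
  have h1 := h a (b, c) d
  have h2 := hm a c d
  have e1 : {ω | A ω = a ∧ (fun ω => (B ω, C ω)) ω = (b, c) ∧ D ω = d}
      = {ω | A ω = a ∧ B ω = b ∧ (fun ω => (C ω, D ω)) ω = (c, d)} := by
    ext ω; simp only [Set.mem_setOf_eq, Prod.mk.injEq]; tauto
  have e2 : {ω | (fun ω => (B ω, C ω)) ω = (b, c) ∧ D ω = d}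
      = {ω | B ω = b ∧ (fun ω => (C ω, D ω)) ω = (c, d)} := by
    ext ω; simp only [Set.mem_setOf_eq, Prod.mk.injEq]; tauto
  have e3 : {ω | (fun ω => (C ω, D ω)) ω = (c, d)} = {ω | C ω = c ∧ D ω = d} := by
    ext ω; simp only [Set.mem_setOf_eq, Prod.mk.injEq]
  have e4 : {ω | A ω = a ∧ (fun ω => (C ω, D ω)) ω = (c, d)} = {ω | A ω = a ∧ C ω = c ∧ D ω = d} := by
    ext ω; simp only [Set.mem_setOf_eq, Prod.mk.injEq]
  rw [e1, e2] at h1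
  rw [e3, e4]
  -- goal : p(a,b,cd) * p(c,d) = p(a,c,d) * p(b,cd)
  by_cases hd : pr μ {ω | D ω = d} = 0
  · have z1 : pr μ {ω | A ω = a ∧ B ω = b ∧ (fun ω => (C ω, D ω)) ω = (c, d)} = 0 := by
      refine le_antisymm (le_trans (pr_mono ?_) hd.le) zero_le
      rintro ω ⟨-, -, h3⟩; exact congrArg Prod.snd h3
    have z2 : pr μ {ω | A ω = a ∧ C ω = c ∧ D ω = d} = 0 := by
      refine le_antisymm (le_trans (pr_mono ?_) hd.le) zero_le
      rintro ω ⟨-, -, h3⟩; exact h3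
    rw [z1, z2, zero_mul, zero_mul]
  · apply ennreal_cancel hd (pr_ne_top _)
    calc pr μ {ω | A ω = a ∧ B ω = b ∧ (fun ω => (C ω, D ω)) ω = (c, d)}
          * pr μ {ω | C ω = c ∧ D ω = d} * pr μ {ω | D ω = d}
        = (pr μ {ω | A ω = a ∧ B ω = b ∧ (fun ω => (C ω, D ω)) ω = (c, d)} * pr μ {ω | D ω = d})
            * pr μ {ω | C ω = c ∧ D ω = d} := by ring
      _ = (pr μ {ω | A ω = a ∧ D ω = d} * pr μ {ω | B ω = b ∧ (fun ω => (C ω, D ω)) ω = (c, d)})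
            * pr μ {ω | C ω = c ∧ D ω = d} := by rw [h1]
      _ = (pr μ {ω | A ω = a ∧ C ω = c ∧ D ω = d} * pr μ {ω | D ω = d})
            * pr μ {ω | B ω = b ∧ (fun ω => (C ω, D ω)) ω = (c, d)} := by rw [h2]; ring
      _ = pr μ {ω | A ω = a ∧ C ω = c ∧ D ω = d}
            * pr μ {ω | B ω = b ∧ (fun ω => (C ω, D ω)) ω = (c, d)} * pr μ {ω | D ω = d} := by ring

theorem CondIndep.contraction (h1 : CondIndep μ A B D)
    (h2 : CondIndep μ A C (fun ω => (B ω, D ω))) :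
    CondIndep μ A (fun ω => (B ω, C ω)) D := by
  rintro a ⟨b, c⟩ d
  have hh2 := h2 a c (b, d)
  have hh1 := h1 a b d
  have e1 : {ω | A ω = a ∧ C ω = c ∧ (fun ω => (B ω, D ω)) ω = (b, d)}
      = {ω | A ω = a ∧ (fun ω => (B ω, C ω)) ω = (b, c) ∧ D ω = d} := by
    ext ω; simp only [Set.mem_setOf_eq, Prod.mk.injEq]; tauto
  have e2 : {ω | (fun ω => (B ω, D ω)) ω = (b, d)} = {ω | B ω = b ∧ D ω = d} := by
    ext ω; simp only [Set.mem_setOf_eq, Prod.mk.injEq]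
  have e3 : {ω | A ω = a ∧ (fun ω => (B ω, D ω)) ω = (b, d)} = {ω | A ω = a ∧ B ω = b ∧ D ω = d} := by
    ext ω; simp only [Set.mem_setOf_eq, Prod.mk.injEq]
  have e4 : {ω | C ω = c ∧ (fun ω => (B ω, D ω)) ω = (b, d)}
      = {ω | (fun ω => (B ω, C ω)) ω = (b, c) ∧ D ω = d} := by
    ext ω; simp only [Set.mem_setOf_eq, Prod.mk.injEq]; tauto
  rw [e1, e2, e3, e4] at hh2
  by_cases hbd : pr μ {ω | B ω = b ∧ D ω = d} = 0
  · have z1 : pr μ {ω | A ω = a ∧ (fun ω => (B ω, C ω)) ω = (b, c) ∧ D ω = d} = 0 := by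
      refine le_antisymm (le_trans (pr_mono ?_) hbd.le) zero_le
      rintro ω ⟨-, h2', h3⟩; exact ⟨congrArg Prod.fst h2', h3⟩
    have z2 : pr μ {ω | (fun ω => (B ω, C ω)) ω = (b, c) ∧ D ω = d} = 0 := by
      refine le_antisymm (le_trans (pr_mono ?_) hbd.le) zero_le
      rintro ω ⟨h2', h3⟩; exact ⟨congrArg Prod.fst h2', h3⟩
    rw [z1, z2, zero_mul, mul_zero]
  · apply ennreal_cancel hbd (pr_ne_top _)
    calc pr μ {ω | A ω = a ∧ (fun ω => (B ω, C ω)) ω = (b, c) ∧ D ω = d} * pr μ {ω | D ω = d}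
          * pr μ {ω | B ω = b ∧ D ω = d}
        = (pr μ {ω | A ω = a ∧ (fun ω => (B ω, C ω)) ω = (b, c) ∧ D ω = d}
            * pr μ {ω | B ω = b ∧ D ω = d}) * pr μ {ω | D ω = d} := by ring
      _ = (pr μ {ω | A ω = a ∧ B ω = b ∧ D ω = d}
            * pr μ {ω | (fun ω => (B ω, C ω)) ω = (b, c) ∧ D ω = d}) * pr μ {ω | D ω = d} := by
          rw [hh2]
      _ = (pr μ {ω | A ω = a ∧ B ω = b ∧ D ω = d} * pr μ {ω | D ω = d})
            * pr μ {ω | (fun ω => (B ω, C ω)) ω = (b, c) ∧ D ω = d} := by ring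
      _ = (pr μ {ω | A ω = a ∧ D ω = d} * pr μ {ω | B ω = b ∧ D ω = d})
            * pr μ {ω | (fun ω => (B ω, C ω)) ω = (b, c) ∧ D ω = d} := by rw [hh1]
      _ = pr μ {ω | A ω = a ∧ D ω = d}
            * pr μ {ω | (fun ω => (B ω, C ω)) ω = (b, c) ∧ D ω = d}
            * pr μ {ω | B ω = b ∧ D ω = d} := by ring

theorem condIndep_const (c₀ : β) (A : Ω → α) (C : Ω → γ) :
    CondIndep μ A (fun _ => c₀) C := by
  intro a b c
  by_cases hb : c₀ = b
  · have e1 : {ω | A ω = a ∧ (fun _ => c₀) ω = b ∧ C ω = c} = {ω | A ω = a ∧ C ω = c} := by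
      ext ω; simp only [Set.mem_setOf_eq, hb]; tauto
    have e2 : {ω | (fun _ => c₀) ω = b ∧ C ω = c} = {ω | C ω = c} := by
      ext ω; simp only [Set.mem_setOf_eq, hb]; tauto
    rw [e1, e2]
  · have e1 : {ω | A ω = a ∧ (fun _ => c₀) ω = b ∧ C ω = c} = (∅ : Set Ω) := by
      ext ω; simp only [Set.mem_setOf_eq, Set.mem_empty_iff_false, iff_false]
      rintro ⟨-, h2, -⟩; exact hb h2
    have e2 : {ω | (fun _ => c₀) ω = b ∧ C ω = c} = (∅ : Set Ω) := by
      ext ω; simp only [Set.mem_setOf_eq, Set.mem_empty_iff_false, iff_false]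
      rintro ⟨h2, -⟩; exact hb h2
    rw [e1, e2, pr_empty, zero_mul, mul_zero]

end CI

section Transfer
variable {υ γ α δ ε γC : Type}

theorem transferB (U : Ω → υ) (W : Ω → γ)
    (fA : γ → α) (fC : γ → γC) (fD : γ → δ) (ζ : δ → ε)
    (hinj : ∀ w w', fA w = fA w' → fC w = fC w' → fD w = fD w' → w = w')
    (H1 : CondIndep μ (fun ω => (U ω, fA (W ω))) (fun ω => fD (W ω)) (fun ω => fC (W ω)))
    (H2 : CondIndep μ U W (fun ω => ζ (fD (W ω)))) :
    CondIndep μ U W (fun ω => fC (W ω)) := by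
  have H1' : CondIndep μ (fun ω => fA (W ω)) (fun ω => fD (W ω)) (fun ω => fC (W ω)) :=
    H1.margA Prod.snd (fun ω => rfl)
  intro u w c
  by_cases hcw : fC w = c
  · subst hcw
    have eW1 : {ω | U ω = u ∧ W ω = w ∧ (fun ω => fC (W ω)) ω = fC w}
        = {ω | U ω = u ∧ W ω = w} := by
      ext ω; simp only [Set.mem_setOf_eq]
      exact ⟨fun ⟨h1, h2, _⟩ => ⟨h1, h2⟩, fun ⟨h1, h2⟩ => ⟨h1, h2, by rw [h2]⟩⟩
    have eW2 : {ω | W ω = w ∧ (fun ω => fC (W ω)) ω = fC w} = {ω | W ω = w} := by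
      ext ω; simp only [Set.mem_setOf_eq]
      exact ⟨fun ⟨h2, _⟩ => h2, fun h2 => ⟨h2, by rw [h2]⟩⟩
    rw [eW1, eW2]
    -- abbreviations
    set Qc := pr μ {ω | (fun ω => fC (W ω)) ω = fC w} with hQc
    set Qdc := pr μ {ω | fD (W ω) = fD w ∧ fC (W ω) = fC w} with hQdc
    set qz := pr μ {ω | ζ (fD (W ω)) = ζ (fD w)} with hqz
    set PUz := pr μ {ω | U ω = u ∧ ζ (fD (W ω)) = ζ (fD w)} with hPUz
    set Puc := pr μ {ω | U ω = u ∧ (fun ω => fC (W ω)) ω = fC w} with hPuc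
    have Pu : ∀ a' : α, ENNReal := fun a' => pr μ {ω | U ω = u ∧ fA (W ω) = a' ∧ fC (W ω) = fC w}
    -- E1g
    have E1g : ∀ a' : α,
        pr μ {ω | U ω = u ∧ fA (W ω) = a' ∧ fC (W ω) = fC w} * qz * Qdc
          = PUz * pr μ {ω | fA (W ω) = a' ∧ fC (W ω) = fC w} * Qdc := by
      intro a'
      by_cases hfib : ∃ w', fA w' = a' ∧ fC w' = fC w ∧ fD w' = fD w
      · obtain ⟨w', hA', hC', hD'⟩ := hfib
        -- singleton fiber rewrites
        have eq4 : {ω | (fun ω => (U ω, fA (W ω))) ω = (u, a')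
              ∧ (fun ω => fD (W ω)) ω = fD w ∧ (fun ω => fC (W ω)) ω = fC w}
            = {ω | U ω = u ∧ W ω = w'} := by
          ext ω; simp only [Set.mem_setOf_eq, Prod.mk.injEq]
          constructor
          · rintro ⟨⟨h1, h2⟩, h3, h4⟩
            exact ⟨h1, hinj _ _ (by rw [h2, hA']) (by rw [h4, hC']) (by rw [h3, hD'])⟩
          · rintro ⟨h1, h2⟩
            exact ⟨⟨h1, by rw [h2, hA']⟩, by rw [h2, hD'], by rw [h2, hC']⟩
        have eq3 : {ω | (fun ω => fA (W ω)) ω = a'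
              ∧ (fun ω => fD (W ω)) ω = fD w ∧ (fun ω => fC (W ω)) ω = fC w}
            = {ω | W ω = w'} := by
          ext ω; simp only [Set.mem_setOf_eq]
          constructor
          · rintro ⟨h2, h3, h4⟩
            exact hinj _ _ (by rw [h2, hA']) (by rw [h4, hC']) (by rw [h3, hD'])
          · rintro h2
            exact ⟨by rw [h2, hA'], by rw [h2, hD'], by rw [h2, hC']⟩
        have eqA : {ω | (fun ω => (U ω, fA (W ω))) ω = (u, a') ∧ (fun ω => fC (W ω)) ω = fC w}
            = {ω | U ω = u ∧ fA (W ω) = a' ∧ fC (W ω) = fC w} := by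
          ext ω; simp only [Set.mem_setOf_eq, Prod.mk.injEq]; tauto
        have eqDC : {ω | (fun ω => fD (W ω)) ω = fD w ∧ (fun ω => fC (W ω)) ω = fC w}
            = {ω | fD (W ω) = fD w ∧ fC (W ω) = fC w} := by
          ext ω; simp only [Set.mem_setOf_eq]
        have eqa : {ω | (fun ω => fA (W ω)) ω = a' ∧ (fun ω => fC (W ω)) ω = fC w}
            = {ω | fA (W ω) = a' ∧ fC (W ω) = fC w} := by
          ext ω; simp only [Set.mem_setOf_eq]
        have hH1 := H1 (u, a') (fD w) (fC w)
        rw [eq4, eqA, eqDC] at hH1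
        -- hH1 : pr {U=u ∧ W=w'} * Qc = Pu a' * Qdc
        have hH1' := H1' a' (fD w) (fC w)
        rw [eq3, eqa, eqDC] at hH1'
        -- hH1' : pr {W=w'} * Qc = p a' * Qdc
        have hH2 := H2 u w' (ζ (fD w))
        have ez1 : {ω | U ω = u ∧ W ω = w' ∧ (fun ω => ζ (fD (W ω))) ω = ζ (fD w)}
            = {ω | U ω = u ∧ W ω = w'} := by
          ext ω; simp only [Set.mem_setOf_eq]
          exact ⟨fun ⟨h1, h2, _⟩ => ⟨h1, h2⟩, fun ⟨h1, h2⟩ => ⟨h1, h2, by rw [h2, hD']⟩⟩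
        have ez2 : {ω | W ω = w' ∧ (fun ω => ζ (fD (W ω))) ω = ζ (fD w)} = {ω | W ω = w'} := by
          ext ω; simp only [Set.mem_setOf_eq]
          exact ⟨fun ⟨h2, _⟩ => h2, fun h2 => ⟨h2, by rw [h2, hD']⟩⟩
        have ez3 : {ω | (fun ω => ζ (fD (W ω))) ω = ζ (fD w)}
            = {ω | ζ (fD (W ω)) = ζ (fD w)} := by
          ext ω; simp only [Set.mem_setOf_eq]
        have ez4 : {ω | U ω = u ∧ (fun ω => ζ (fD (W ω))) ω = ζ (fD w)}
            = {ω | U ω = u ∧ ζ (fD (W ω)) = ζ (fD w)} := by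
          ext ω; simp only [Set.mem_setOf_eq]
        rw [ez1, ez2, ez3, ez4] at hH2
        -- hH2 : pr {U=u ∧ W=w'} * qz = PUz * pr {W=w'}
        calc pr μ {ω | U ω = u ∧ fA (W ω) = a' ∧ fC (W ω) = fC w} * qz * Qdc
            = (pr μ {ω | U ω = u ∧ fA (W ω) = a' ∧ fC (W ω) = fC w} * Qdc) * qz := by ring
          _ = (pr μ {ω | U ω = u ∧ W ω = w'} * Qc) * qz := by rw [← hH1]
          _ = (pr μ {ω | U ω = u ∧ W ω = w'} * qz) * Qc := by ring
          _ = (PUz * pr μ {ω | W ω = w'}) * Qc := by rw [hH2]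
          _ = PUz * (pr μ {ω | W ω = w'} * Qc) := by ring
          _ = PUz * (pr μ {ω | fA (W ω) = a' ∧ fC (W ω) = fC w} * Qdc) := by rw [hH1']
          _ = PUz * pr μ {ω | fA (W ω) = a' ∧ fC (W ω) = fC w} * Qdc := by ring
      · push_neg at hfib
        have eq4 : {ω | (fun ω => (U ω, fA (W ω))) ω = (u, a')
              ∧ (fun ω => fD (W ω)) ω = fD w ∧ (fun ω => fC (W ω)) ω = fC w} = (∅ : Set Ω) := by
          ext ω; simp only [Set.mem_setOf_eq, Prod.mk.injEq, Set.mem_empty_iff_false, iff_false]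
          rintro ⟨⟨-, h2⟩, h3, h4⟩; exact hfib (W ω) h2 h4 h3
        have eq3 : {ω | (fun ω => fA (W ω)) ω = a'
              ∧ (fun ω => fD (W ω)) ω = fD w ∧ (fun ω => fC (W ω)) ω = fC w} = (∅ : Set Ω) := by
          ext ω; simp only [Set.mem_setOf_eq, Set.mem_empty_iff_false, iff_false]
          rintro ⟨h2, h3, h4⟩; exact hfib (W ω) h2 h4 h3
        have eqA : {ω | (fun ω => (U ω, fA (W ω))) ω = (u, a') ∧ (fun ω => fC (W ω)) ω = fC w}
            = {ω | U ω = u ∧ fA (W ω) = a' ∧ fC (W ω) = fC w} := by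
          ext ω; simp only [Set.mem_setOf_eq, Prod.mk.injEq]; tauto
        have eqDC : {ω | (fun ω => fD (W ω)) ω = fD w ∧ (fun ω => fC (W ω)) ω = fC w}
            = {ω | fD (W ω) = fD w ∧ fC (W ω) = fC w} := by
          ext ω; simp only [Set.mem_setOf_eq]
        have eqa : {ω | (fun ω => fA (W ω)) ω = a' ∧ (fun ω => fC (W ω)) ω = fC w}
            = {ω | fA (W ω) = a' ∧ fC (W ω) = fC w} := by
          ext ω; simp only [Set.mem_setOf_eq]
        have hH1 := H1 (u, a') (fD w) (fC w)
        rw [eq4, eqA, eqDC, pr_empty, zero_mul] at hH1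
        have hH1' := H1' a' (fD w) (fC w)
        rw [eq3, eqa, eqDC, pr_empty, zero_mul] at hH1'
        calc pr μ {ω | U ω = u ∧ fA (W ω) = a' ∧ fC (W ω) = fC w} * qz * Qdc
            = (pr μ {ω | U ω = u ∧ fA (W ω) = a' ∧ fC (W ω) = fC w} * Qdc) * qz := by ring
          _ = 0 * qz := by rw [← hH1]
          _ = PUz * (pr μ {ω | fA (W ω) = a' ∧ fC (W ω) = fC w} * Qdc) := by
              rw [← hH1']; ring
          _ = PUz * pr μ {ω | fA (W ω) = a' ∧ fC (W ω) = fC w} * Qdc := by ring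
    -- E2
    have E2 : ∀ a' : α,
        pr μ {ω | U ω = u ∧ fA (W ω) = a' ∧ fC (W ω) = fC w} * Qdc
            * pr μ {ω | fA (W ω) = fA w ∧ fC (W ω) = fC w}
          = pr μ {ω | U ω = u ∧ fA (W ω) = fA w ∧ fC (W ω) = fC w} * Qdc
            * pr μ {ω | fA (W ω) = a' ∧ fC (W ω) = fC w} := by
      intro a'
      by_cases hqz : qz = 0
      · have hQdc0 : Qdc = 0 := by
          refine le_antisymm (le_trans (pr_mono ?_) hqz.le) zero_le
          rintro ω ⟨h1, -⟩; exact congrArg ζ h1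
        rw [hQdc0]; ring
      · apply ennreal_cancel hqz (pr_ne_top _)
        calc pr μ {ω | U ω = u ∧ fA (W ω) = a' ∧ fC (W ω) = fC w} * Qdc
              * pr μ {ω | fA (W ω) = fA w ∧ fC (W ω) = fC w} * qz
            = (pr μ {ω | U ω = u ∧ fA (W ω) = a' ∧ fC (W ω) = fC w} * qz * Qdc)
              * pr μ {ω | fA (W ω) = fA w ∧ fC (W ω) = fC w} := by ring
          _ = (PUz * pr μ {ω | fA (W ω) = a' ∧ fC (W ω) = fC w} * Qdc)
              * pr μ {ω | fA (W ω) = fA w ∧ fC (W ω) = fC w} := by rw [E1g a']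
          _ = (PUz * pr μ {ω | fA (W ω) = fA w ∧ fC (W ω) = fC w} * Qdc)
              * pr μ {ω | fA (W ω) = a' ∧ fC (W ω) = fC w} := by ring
          _ = (pr μ {ω | U ω = u ∧ fA (W ω) = fA w ∧ fC (W ω) = fC w} * qz * Qdc)
              * pr μ {ω | fA (W ω) = a' ∧ fC (W ω) = fC w} := by rw [E1g (fA w)]
          _ = pr μ {ω | U ω = u ∧ fA (W ω) = fA w ∧ fC (W ω) = fC w} * Qdc
              * pr μ {ω | fA (W ω) = a' ∧ fC (W ω) = fC w} * qz := by ring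
    -- sum E2 over a'
    have hsum1 : Puc = ∑' a' : α, pr μ {ω | U ω = u ∧ fA (W ω) = a' ∧ fC (W ω) = fC w} := by
      rw [hPuc, pr_partition' (fun ω => fA (W ω)) (fun ω => U ω = u ∧ (fun ω => fC (W ω)) ω = fC w)]
      refine tsum_congr fun a' => ?_
      congr 1; ext ω; simp only [Set.mem_setOf_eq]; tauto
    have hsum2 : Qc = ∑' a' : α, pr μ {ω | fA (W ω) = a' ∧ fC (W ω) = fC w} := by
      rw [hQc, pr_partition' (fun ω => fA (W ω)) (fun ω => (fun ω => fC (W ω)) ω = fC w)]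
      refine tsum_congr fun a' => ?_
      congr 1; ext ω; simp only [Set.mem_setOf_eq]; tauto
    have ES : Puc * Qdc * pr μ {ω | fA (W ω) = fA w ∧ fC (W ω) = fC w}
        = pr μ {ω | U ω = u ∧ fA (W ω) = fA w ∧ fC (W ω) = fC w} * Qdc * Qc := by
      calc Puc * Qdc * pr μ {ω | fA (W ω) = fA w ∧ fC (W ω) = fC w}
          = ∑' a' : α, pr μ {ω | U ω = u ∧ fA (W ω) = a' ∧ fC (W ω) = fC w}
              * (Qdc * pr μ {ω | fA (W ω) = fA w ∧ fC (W ω) = fC w}) := by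
            rw [hsum1, ← ENNReal.tsum_mul_right, ← ENNReal.tsum_mul_right]
            exact tsum_congr fun a' => mul_assoc _ _ _
        _ = ∑' a' : α, pr μ {ω | U ω = u ∧ fA (W ω) = fA w ∧ fC (W ω) = fC w}
              * Qdc * pr μ {ω | fA (W ω) = a' ∧ fC (W ω) = fC w} := by
            refine tsum_congr fun a' => ?_
            rw [← mul_assoc]; exact E2 a'
        _ = pr μ {ω | U ω = u ∧ fA (W ω) = fA w ∧ fC (W ω) = fC w} * Qdc * Qc := by
            rw [hsum2, ENNReal.tsum_mul_left]
    -- final step: K1, K2 with w' := w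
    have eq4 : {ω | (fun ω => (U ω, fA (W ω))) ω = (u, fA w)
          ∧ (fun ω => fD (W ω)) ω = fD w ∧ (fun ω => fC (W ω)) ω = fC w}
        = {ω | U ω = u ∧ W ω = w} := by
      ext ω; simp only [Set.mem_setOf_eq, Prod.mk.injEq]
      constructor
      · rintro ⟨⟨h1, h2⟩, h3, h4⟩; exact ⟨h1, hinj _ _ h2 h4 h3⟩
      · rintro ⟨h1, h2⟩; exact ⟨⟨h1, by rw [h2]⟩, by rw [h2], by rw [h2]⟩
    have eq3 : {ω | (fun ω => fA (W ω)) ω = fA w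
          ∧ (fun ω => fD (W ω)) ω = fD w ∧ (fun ω => fC (W ω)) ω = fC w}
        = {ω | W ω = w} := by
      ext ω; simp only [Set.mem_setOf_eq]
      constructor
      · rintro ⟨h2, h3, h4⟩; exact hinj _ _ h2 h4 h3
      · rintro h2; exact ⟨by rw [h2], by rw [h2], by rw [h2]⟩
    have eqA : {ω | (fun ω => (U ω, fA (W ω))) ω = (u, fA w) ∧ (fun ω => fC (W ω)) ω = fC w}
        = {ω | U ω = u ∧ fA (W ω) = fA w ∧ fC (W ω) = fC w} := by
      ext ω; simp only [Set.mem_setOf_eq, Prod.mk.injEq]; tauto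
    have eqDC : {ω | (fun ω => fD (W ω)) ω = fD w ∧ (fun ω => fC (W ω)) ω = fC w}
        = {ω | fD (W ω) = fD w ∧ fC (W ω) = fC w} := by
      ext ω; simp only [Set.mem_setOf_eq]
    have eqa : {ω | (fun ω => fA (W ω)) ω = fA w ∧ (fun ω => fC (W ω)) ω = fC w}
        = {ω | fA (W ω) = fA w ∧ fC (W ω) = fC w} := by
      ext ω; simp only [Set.mem_setOf_eq]
    have K1 := H1 (u, fA w) (fD w) (fC w)
    rw [eq4, eqA, eqDC] at K1
    have K2 := H1' (fA w) (fD w) (fC w)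
    rw [eq3, eqa, eqDC] at K2
    -- goal : pr {U=u ∧ W=w} * Qc = Puc * pr {W=w}
    by_cases hQdc : Qdc = 0
    · have z1 : pr μ {ω | U ω = u ∧ W ω = w} = 0 := by
        refine le_antisymm (le_trans (pr_mono ?_) hQdc.le) zero_le
        rintro ω ⟨-, h2⟩; exact ⟨by rw [h2], by rw [h2]⟩
      have z2 : pr μ {ω | W ω = w} = 0 := by
        refine le_antisymm (le_trans (pr_mono ?_) hQdc.le) zero_le
        rintro ω h2; exact ⟨by rw [show W ω = w from h2], by rw [show W ω = w from h2]⟩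
      rw [z1, z2, zero_mul, mul_zero]
    · by_cases hQc : Qc = 0
      · have z2 : pr μ {ω | W ω = w} = 0 := by
          refine le_antisymm (le_trans (pr_mono ?_) hQc.le) zero_le
          rintro ω h2
          have h2' : W ω = w := h2
          show fC (W ω) = fC w
          rw [h2']
        have z1 : pr μ {ω | U ω = u ∧ W ω = w} = 0 := by
          refine le_antisymm (le_trans (pr_mono (fun ω h => h.2)) z2.le) zero_le
        rw [z1, z2, zero_mul, mul_zero]
      · apply ennreal_cancel (mul_ne_zero hQc hQdc)
          (ENNReal.mul_ne_top (pr_ne_top _) (pr_ne_top _))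
        calc pr μ {ω | U ω = u ∧ W ω = w} * Qc * (Qc * Qdc)
            = (pr μ {ω | U ω = u ∧ W ω = w} * Qc) * Qc * Qdc := by ring
          _ = (pr μ {ω | U ω = u ∧ fA (W ω) = fA w ∧ fC (W ω) = fC w} * Qdc) * Qc * Qdc := by
              rw [K1]
          _ = (pr μ {ω | U ω = u ∧ fA (W ω) = fA w ∧ fC (W ω) = fC w} * Qdc * Qc) * Qdc := by
              ring
          _ = (Puc * Qdc * pr μ {ω | fA (W ω) = fA w ∧ fC (W ω) = fC w}) * Qdc := by rw [← ES]
          _ = Puc * (pr μ {ω | fA (W ω) = fA w ∧ fC (W ω) = fC w} * Qdc) * Qdc := by ring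
          _ = Puc * (pr μ {ω | W ω = w} * Qc) * Qdc := by rw [K2]
          _ = Puc * pr μ {ω | W ω = w} * (Qc * Qdc) := by ring
  · have e1 : {ω | U ω = u ∧ W ω = w ∧ (fun ω => fC (W ω)) ω = c} = (∅ : Set Ω) := by
      ext ω; simp only [Set.mem_setOf_eq, Set.mem_empty_iff_false, iff_false]
      rintro ⟨-, h2, h3⟩; exact hcw (by rw [← h3, h2])
    have e2 : {ω | W ω = w ∧ (fun ω => fC (W ω)) ω = c} = (∅ : Set Ω) := by
      ext ω; simp only [Set.mem_setOf_eq, Set.mem_empty_iff_false, iff_false]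
      rintro ⟨h2, h3⟩; exact hcw (by rw [← h3, h2])
    rw [e1, e2, pr_empty, zero_mul, mul_zero]


end Transfer

section Wrap
variable {υ γ ν βT : Type} {U : Ω → υ} {W : Ω → γ} {V : Ω → ν} {T : Ω → βT}

/-- the conditional distribution of `U` given `W = w`, as a statistic -/
noncomputable def tauStat (μ : PMF Ω) (U : Ω → υ) (W : Ω → γ) : γ → (υ → ENNReal) :=
  fun w u => pr μ {ω | U ω = u ∧ W ω = w} * (pr μ {ω | W ω = w})⁻¹

theorem tauStat_suff (μ : PMF Ω) (U : Ω → υ) (W : Ω → γ) :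
    SuffStat μ W U (fun ω => tauStat μ U W (W ω)) := by
  constructor
  · exact ⟨tauStat μ U W, fun ω _ => rfl⟩
  · intro u w t
    by_cases hτ : tauStat μ U W w = t
    · have e1 : {ω | U ω = u ∧ W ω = w ∧ (fun ω => tauStat μ U W (W ω)) ω = t}
          = {ω | U ω = u ∧ W ω = w} := by
        ext ω; simp only [Set.mem_setOf_eq]
        exact ⟨fun ⟨h1, h2, _⟩ => ⟨h1, h2⟩, fun ⟨h1, h2⟩ => ⟨h1, h2, by rw [h2, hτ]⟩⟩
      have e2 : {ω | W ω = w ∧ (fun ω => tauStat μ U W (W ω)) ω = t} = {ω | W ω = w} := by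
        ext ω; simp only [Set.mem_setOf_eq]
        exact ⟨fun ⟨h2, _⟩ => h2, fun h2 => ⟨h2, by rw [h2, hτ]⟩⟩
      rw [e1, e2]
      have subfact : ∀ w', tauStat μ U W w' = t → ∀ u',
          pr μ {ω | U ω = u' ∧ W ω = w'} = t u' * pr μ {ω | W ω = w'} := by
        intro w' hw' u'
        by_cases h0 : pr μ {ω | W ω = w'} = 0
        · rw [h0, mul_zero]
          refine le_antisymm (le_trans (pr_mono ?_) h0.le) zero_le
          rintro ω ⟨-, h2⟩; exact h2
        · have : t u' = pr μ {ω | U ω = u' ∧ W ω = w'} * (pr μ {ω | W ω = w'})⁻¹ := by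
            rw [← hw']; rfl
          rw [this, mul_assoc, ENNReal.inv_mul_cancel h0 (pr_ne_top _), mul_one]
      have hs1 : pr μ {ω | (fun ω => tauStat μ U W (W ω)) ω = t}
          = ∑' w', pr μ {ω | (fun ω => tauStat μ U W (W ω)) ω = t ∧ W ω = w'} :=
        pr_partition' W _
      have hs2 : pr μ {ω | U ω = u ∧ (fun ω => tauStat μ U W (W ω)) ω = t}
          = ∑' w', pr μ {ω | (U ω = u ∧ (fun ω => tauStat μ U W (W ω)) ω = t) ∧ W ω = w'} :=
        pr_partition' W _
      rw [hs1, hs2, ← ENNReal.tsum_mul_left, ← ENNReal.tsum_mul_right]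
      refine tsum_congr fun w' => ?_
      by_cases hw' : tauStat μ U W w' = t
      · have f1 : {ω | (fun ω => tauStat μ U W (W ω)) ω = t ∧ W ω = w'} = {ω | W ω = w'} := by
          ext ω; simp only [Set.mem_setOf_eq]
          exact ⟨fun h => h.2, fun h2 => ⟨by
            have h2' : W ω = w' := h2
            show tauStat μ U W (W ω) = t
            rw [h2']; exact hw', h2⟩⟩
        have f2 : {ω | (U ω = u ∧ (fun ω => tauStat μ U W (W ω)) ω = t) ∧ W ω = w'}
            = {ω | U ω = u ∧ W ω = w'} := by
          ext ω; simp only [Set.mem_setOf_eq]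
          exact ⟨fun h => ⟨h.1.1, h.2⟩, fun h => ⟨⟨h.1, by
            have h2' : W ω = w' := h.2
            show tauStat μ U W (W ω) = t
            rw [h2']; exact hw'⟩, h.2⟩⟩
        rw [f1, f2, subfact w' hw' u, subfact w hτ u]
        ring
      · have f1 : {ω | (fun ω => tauStat μ U W (W ω)) ω = t ∧ W ω = w'} = (∅ : Set Ω) := by
          ext ω; simp only [Set.mem_setOf_eq, Set.mem_empty_iff_false, iff_false]
          rintro ⟨h1, h2⟩; exact hw' (by rw [← show W ω = w' from h2]; exact h1)
        have f2 : {ω | (U ω = u ∧ (fun ω => tauStat μ U W (W ω)) ω = t) ∧ W ω = w'}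
            = (∅ : Set Ω) := by
          ext ω; simp only [Set.mem_setOf_eq, Set.mem_empty_iff_false, iff_false]
          rintro ⟨⟨-, h1⟩, h2⟩; exact hw' (by rw [← show W ω = w' from h2]; exact h1)
        rw [f1, f2, pr_empty, mul_zero, zero_mul]
    · have e1 : {ω | U ω = u ∧ W ω = w ∧ (fun ω => tauStat μ U W (W ω)) ω = t}
          = (∅ : Set Ω) := by
        ext ω; simp only [Set.mem_setOf_eq, Set.mem_empty_iff_false, iff_false]
        rintro ⟨-, h2, h3⟩; exact hτ (by rw [← h2]; exact h3)
      have e2 : {ω | W ω = w ∧ (fun ω => tauStat μ U W (W ω)) ω = t} = (∅ : Set Ω) := by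
        ext ω; simp only [Set.mem_setOf_eq, Set.mem_empty_iff_false, iff_false]
        rintro ⟨h2, h3⟩; exact hτ (by rw [← h2]; exact h3)
      rw [e1, e2, pr_empty, zero_mul, mul_zero]

theorem main_wrap (π : γ → ν) (hV : ∀ ω, V ω = π (W ω))
    (key : CondIndep μ U W V) (hT : MinSuffStat μ W U T) :
    MinSuffStat μ V U T := by
  obtain ⟨⟨hWT, hUWT⟩, hmin⟩ := hT
  -- part P : CondIndep μ U V T
  have partP : CondIndep μ U V T := hUWT.margB π hV
  -- L2 : lifting sufficiency from V to W
  have L2 : ∀ {δ' : Type} (T' : Ω → δ') (f : ν → δ'),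
      (∀ ω ∈ μ.support, T' ω = f (V ω)) → CondIndep μ U V T' → CondIndep μ U W T' := by
    intro δ' T' f hf hci
    intro u w t'
    have kk := key u w (π w)
    have k1 : {ω | U ω = u ∧ W ω = w ∧ V ω = π w} = {ω | U ω = u ∧ W ω = w} := by
      ext ω; simp only [Set.mem_setOf_eq]
      exact ⟨fun ⟨h1, h2, _⟩ => ⟨h1, h2⟩, fun ⟨h1, h2⟩ => ⟨h1, h2, by rw [hV ω, h2]⟩⟩
    have k2 : {ω | W ω = w ∧ V ω = π w} = {ω | W ω = w} := by
      ext ω; simp only [Set.mem_setOf_eq]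
      exact ⟨fun ⟨h2, _⟩ => h2, fun h2 => ⟨h2, by rw [hV ω, h2]⟩⟩
    rw [k1, k2] at kk
    -- kk : p(u,w) * pr{V=πw} = pr{U=u,V=πw} * pr{W=w}
    by_cases hft : f (π w) = t'
    · have a1 : pr μ {ω | U ω = u ∧ W ω = w ∧ T' ω = t'} = pr μ {ω | U ω = u ∧ W ω = w} := by
        refine pr_congr fun ω hω => ?_
        simp only [Set.mem_setOf_eq]
        exact ⟨fun ⟨h1, h2, _⟩ => ⟨h1, h2⟩,
          fun ⟨h1, h2⟩ => ⟨h1, h2, by rw [hf ω hω, hV ω, h2, hft]⟩⟩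
      have a2 : pr μ {ω | W ω = w ∧ T' ω = t'} = pr μ {ω | W ω = w} := by
        refine pr_congr fun ω hω => ?_
        simp only [Set.mem_setOf_eq]
        exact ⟨fun ⟨h2, _⟩ => h2, fun h2 => ⟨h2, by rw [hf ω hω, hV ω, h2, hft]⟩⟩
      have a3 : pr μ {ω | V ω = π w ∧ T' ω = t'} = pr μ {ω | V ω = π w} := by
        refine pr_congr fun ω hω => ?_
        simp only [Set.mem_setOf_eq]
        exact ⟨fun ⟨h2, _⟩ => h2, fun h2 => ⟨h2, by rw [hf ω hω, h2, hft]⟩⟩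
      have a4 : pr μ {ω | U ω = u ∧ V ω = π w ∧ T' ω = t'}
          = pr μ {ω | U ω = u ∧ V ω = π w} := by
        refine pr_congr fun ω hω => ?_
        simp only [Set.mem_setOf_eq]
        exact ⟨fun ⟨h1, h2, _⟩ => ⟨h1, h2⟩,
          fun ⟨h1, h2⟩ => ⟨h1, h2, by rw [hf ω hω, h2, hft]⟩⟩
      have hci' := hci u (π w) t'
      rw [a3, a4] at hci'
      -- hci' : p(u,πw) * pr{T'=t'} = pr{U=u,T'=t'} * pr{V=πw}
      rw [a1, a2]
      -- goal : p(u,w) * pr{T'=t'} = pr{U=u,T'=t'} * pr{W=w}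
      by_cases hqv : pr μ {ω | V ω = π w} = 0
      · have zw : pr μ {ω | W ω = w} = 0 := by
          refine le_antisymm (le_trans (pr_mono ?_) hqv.le) zero_le
          intro ω h2; rw [Set.mem_setOf_eq, hV ω, show W ω = w from h2]
        have zuw : pr μ {ω | U ω = u ∧ W ω = w} = 0 :=
          le_antisymm (le_trans (pr_mono fun ω h => h.2) zw.le) zero_le
        rw [zw, zuw, zero_mul, mul_zero]
      · apply ennreal_cancel hqv (pr_ne_top _)
        calc pr μ {ω | U ω = u ∧ W ω = w} * pr μ {ω | T' ω = t'} * pr μ {ω | V ω = π w}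
            = (pr μ {ω | U ω = u ∧ W ω = w} * pr μ {ω | V ω = π w}) * pr μ {ω | T' ω = t'} := by
              ring
          _ = (pr μ {ω | U ω = u ∧ V ω = π w} * pr μ {ω | W ω = w}) * pr μ {ω | T' ω = t'} := by
              rw [kk]
          _ = (pr μ {ω | U ω = u ∧ V ω = π w} * pr μ {ω | T' ω = t'}) * pr μ {ω | W ω = w} := by
              ring
          _ = (pr μ {ω | U ω = u ∧ T' ω = t'} * pr μ {ω | V ω = π w}) * pr μ {ω | W ω = w} := by
              rw [hci']
          _ = pr μ {ω | U ω = u ∧ T' ω = t'} * pr μ {ω | W ω = w} * pr μ {ω | V ω = π w} := by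
              ring
    · have a1 : pr μ {ω | U ω = u ∧ W ω = w ∧ T' ω = t'} = pr μ (∅ : Set Ω) := by
        refine pr_congr fun ω hω => ?_
        simp only [Set.mem_setOf_eq, Set.mem_empty_iff_false, iff_false]
        rintro ⟨-, h2, h3⟩
        exact hft (by rw [← h3, hf ω hω, hV ω, h2])
      have a2 : pr μ {ω | W ω = w ∧ T' ω = t'} = pr μ (∅ : Set Ω) := by
        refine pr_congr fun ω hω => ?_
        simp only [Set.mem_setOf_eq, Set.mem_empty_iff_false, iff_false]
        rintro ⟨h2, h3⟩
        exact hft (by rw [← h3, hf ω hω, hV ω, h2])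
      rw [a1, a2, pr_empty, zero_mul, mul_zero]
  -- part A : FunDep μ V T
  have partA : FunDep μ V T := by
    obtain ⟨g, hg⟩ := hmin (υ → ENNReal) (fun ω => tauStat μ U W (W ω)) (tauStat_suff μ U W)
    refine ⟨fun v => g (fun u => pr μ {ω | U ω = u ∧ V ω = v} * (pr μ {ω | V ω = v})⁻¹),
      fun ω hω => ?_⟩
    rw [hg ω hω]
    congr 1
    funext u
    have kk := key u (W ω) (V ω)
    have k1 : {ω' | U ω' = u ∧ W ω' = W ω ∧ V ω' = V ω} = {ω' | U ω' = u ∧ W ω' = W ω} := by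
      ext ω'; simp only [Set.mem_setOf_eq]
      exact ⟨fun ⟨h1, h2, _⟩ => ⟨h1, h2⟩, fun ⟨h1, h2⟩ => ⟨h1, h2, by rw [hV ω', h2, hV ω]⟩⟩
    have k2 : {ω' | W ω' = W ω ∧ V ω' = V ω} = {ω' | W ω' = W ω} := by
      ext ω'; simp only [Set.mem_setOf_eq]
      exact ⟨fun ⟨h2, _⟩ => h2, fun h2 => ⟨h2, by rw [hV ω', h2, hV ω]⟩⟩
    rw [k1, k2] at kk
    -- kk : p(u, Wω) * qv = p(u, Vω) * qw
    have hw0 : pr μ {ω' | W ω' = W ω} ≠ 0 := pr_ne_zero_of_mem hω rfl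
    have hv0 : pr μ {ω' | V ω' = V ω} ≠ 0 := pr_ne_zero_of_mem hω rfl
    show pr μ {ω' | U ω' = u ∧ W ω' = W ω} * (pr μ {ω' | W ω' = W ω})⁻¹
        = pr μ {ω' | U ω' = u ∧ V ω' = V ω} * (pr μ {ω' | V ω' = V ω})⁻¹
    apply ennreal_cancel (mul_ne_zero hv0 hw0)
      (ENNReal.mul_ne_top (pr_ne_top _) (pr_ne_top _))
    calc pr μ {ω' | U ω' = u ∧ W ω' = W ω} * (pr μ {ω' | W ω' = W ω})⁻¹
          * (pr μ {ω' | V ω' = V ω} * pr μ {ω' | W ω' = W ω})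
        = pr μ {ω' | U ω' = u ∧ W ω' = W ω} * pr μ {ω' | V ω' = V ω}
          * ((pr μ {ω' | W ω' = W ω})⁻¹ * pr μ {ω' | W ω' = W ω}) := by ring
      _ = pr μ {ω' | U ω' = u ∧ W ω' = W ω} * pr μ {ω' | V ω' = V ω} := by
          rw [ENNReal.inv_mul_cancel hw0 (pr_ne_top _), mul_one]
      _ = pr μ {ω' | U ω' = u ∧ V ω' = V ω} * pr μ {ω' | W ω' = W ω} := kk
      _ = pr μ {ω' | U ω' = u ∧ V ω' = V ω} * (pr μ {ω' | V ω' = V ω})⁻¹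
          * (pr μ {ω' | V ω' = V ω} * pr μ {ω' | W ω' = W ω}) := by
          rw [show pr μ {ω' | U ω' = u ∧ V ω' = V ω} * (pr μ {ω' | V ω' = V ω})⁻¹
              * (pr μ {ω' | V ω' = V ω} * pr μ {ω' | W ω' = W ω})
            = pr μ {ω' | U ω' = u ∧ V ω' = V ω} * pr μ {ω' | W ω' = W ω}
              * ((pr μ {ω' | V ω' = V ω})⁻¹ * pr μ {ω' | V ω' = V ω}) from by ring,
            ENNReal.inv_mul_cancel hv0 (pr_ne_top _), mul_one]
  refine ⟨⟨partA, partP⟩, ?_⟩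
  intro δ' T' hsuff
  obtain ⟨⟨f, hf⟩, hci⟩ := hsuff
  exact hmin δ' T' ⟨⟨fun wv => f (π wv), fun ω hω => by rw [hf ω hω, hV ω]⟩, L2 T' f hf hci⟩

end Wrap
end AuxProb

section Graph
variable {n k : ℕ} (i : Fin n)

/-- the `t`-th node of the chain `Y_i → X_i^1 → ⋯ → X_i^k → Z_i` -/
def cNode (t : ℕ) : BNode n k :=
  if t = 0 then .y i else if h : 1 ≤ t ∧ t ≤ k then .x i ⟨t - 1, by omega⟩ else .z i

theorem cNode_zero : cNode (n := n) (k := k) i 0 = .y i := rfl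

theorem cNode_x {t : ℕ} (h1 : 1 ≤ t) (h2 : t ≤ k) :
    cNode (n := n) (k := k) i t = .x i ⟨t - 1, by omega⟩ := by
  unfold cNode
  rw [if_neg (by omega), dif_pos ⟨h1, h2⟩]

theorem cNode_z : cNode (n := n) (k := k) i (k + 1) = .z i := by
  unfold cNode
  rw [if_neg (by omega), dif_neg (by omega)]

theorem cNode_inj {s t : ℕ} (hs : s ≤ k + 1) (ht : t ≤ k + 1)
    (h : cNode (n := n) (k := k) i s = cNode i t) : s = t := by
  rcases Nat.eq_zero_or_pos s with h0 | h0 <;> rcases Nat.eq_zero_or_pos t with h0' | h0'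
  · omega
  · subst h0
    rcases Nat.lt_or_ge t (k + 1) with hlt | hge
    · rw [cNode_zero, cNode_x i h0' (by omega)] at h; exact absurd h (by simp)
    · have : t = k + 1 := by omega
      subst this; rw [cNode_zero, cNode_z] at h; exact absurd h (by simp)
  · subst h0'
    rcases Nat.lt_or_ge s (k + 1) with hlt | hge
    · rw [cNode_zero, cNode_x i h0 (by omega)] at h; exact absurd h (by simp)
    · have : s = k + 1 := by omega
      subst this; rw [cNode_zero, cNode_z] at h; exact absurd h (by simp)
  · rcases Nat.lt_or_ge s (k + 1) with hlt | hge <;> rcases Nat.lt_or_ge t (k + 1) with hlt' | hge'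
    · rw [cNode_x i h0 (by omega), cNode_x i h0' (by omega)] at h
      simp only [BNode.x.injEq, Fin.mk.injEq] at h
      omega
    · have : t = k + 1 := by omega
      subst this; rw [cNode_x i h0 (by omega), cNode_z] at h; exact absurd h (by simp)
    · have : s = k + 1 := by omega
      subst this; rw [cNode_z, cNode_x i h0' (by omega)] at h; exact absurd h (by simp)
    · omega

variable (C1 : Finset (Fin n))

theorem edge1_parent_mem (hk : 1 ≤ k) {p : ℕ} (h1 : 1 ≤ p) (h2 : p ≤ k + 1) :
    edge1 n k C1 (cNode i (p - 1)) (cNode i p) := by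
  rcases Nat.eq_or_lt_of_le h1 with h | h
  · have hp : p = 1 := h.symm
    subst hp
    have e : (1 : ℕ) - 1 = 0 := rfl
    rw [e, cNode_zero, cNode_x i (by omega) (by omega)]
    exact ⟨rfl, rfl⟩
  · rcases Nat.lt_or_ge p (k + 1) with hlt | hge
    · rw [cNode_x i (by omega) (by omega : p - 1 ≤ k), cNode_x i (by omega) (by omega)]
      exact ⟨rfl, by show p - 1 = (p - 1 - 1) + 1; omega⟩
    · have hp : p = k + 1 := by omega
      subst hp
      rw [cNode_x i (by omega) (by omega : k + 1 - 1 ≤ k), cNode_z]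
      exact ⟨rfl, by show k + 1 - 1 - 1 = k - 1; omega⟩

theorem edge1_parent_uniq {p : ℕ} (h1 : 1 ≤ p) (h2 : p ≤ k + 1) (v : BNode n k)
    (hv : edge1 n k C1 v (cNode i p)) : v = cNode i (p - 1) := by
  rcases Nat.lt_or_ge p (k + 1) with hlt | hge
  · rw [cNode_x i h1 (by omega)] at hv
    cases v with
    | u i' => exact absurd hv id
    | y i' =>
      obtain ⟨hi, hj⟩ := hv
      have hj' : p - 1 = 0 := hj
      rw [hi, show p - 1 = 0 from hj', cNode_zero]
    | z i' => exact absurd hv id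
    | x i' j' =>
      obtain ⟨hi, hj⟩ := hv
      have hj' : p - 1 = (j' : ℕ) + 1 := hj
      have hjk : (j' : ℕ) < k := j'.isLt
      rw [hi, cNode_x i (by omega) (by omega)]
      congr 1
      apply Fin.ext
      show (j' : ℕ) = p - 1 - 1
      omega
  · have hp : p = k + 1 := by omega
    subst hp
    rw [cNode_z] at hv
    cases v with
    | u i' => exact absurd hv id
    | y i' => exact absurd hv id
    | z i' => exact absurd hv id
    | x i' j' =>
      obtain ⟨hi, hj⟩ := hv
      have hj' : (j' : ℕ) = k - 1 := hj
      rw [hi, cNode_x i (by omega) (by omega : k + 1 - 1 ≤ k)]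
      congr 1
      apply Fin.ext
      show (j' : ℕ) = k + 1 - 1 - 1
      omega

theorem edge1_desc {p : ℕ} (h1 : 1 ≤ p) (h2 : p ≤ k + 1) (v : BNode n k)
    (hv : Relation.ReflTransGen (edge1 n k C1) (cNode i p) v) :
    ∃ q, p ≤ q ∧ q ≤ k + 1 ∧ v = cNode i q := by
  induction hv with
  | refl => exact ⟨p, le_refl p, h2, rfl⟩
  | tail hab hbc ih =>
    obtain ⟨q, hq1, hq2, rfl⟩ := ih
    rcases Nat.lt_or_ge q (k + 1) with hlt | hge
    · rw [cNode_x i (by omega) (by omega)] at hbc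
      rename_i c
      cases c with
      | u i' => exact absurd hbc id
      | y i' => exact absurd hbc id
      | z i' =>
        obtain ⟨hi, hj⟩ := hbc
        subst hi
        exact ⟨k + 1, by omega, le_refl _, (cNode_z _).symm⟩
      | x i' j' =>
        obtain ⟨hi, hj⟩ := hbc
        have hj' : (j' : ℕ) = (q - 1) + 1 := hj
        have hjk : (j' : ℕ) < k := j'.isLt
        subst hi
        refine ⟨q + 1, by omega, by omega, ?_⟩
        rw [cNode_x _ (by omega) (by omega)]
        congr 1
        apply Fin.ext
        show (j' : ℕ) = q + 1 - 1
        omega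
    · have hq : q = k + 1 := by omega
      subst hq
      rw [cNode_z] at hbc
      rename_i c
      cases c <;> exact absurd hbc id

theorem edge1_nd_u {p : ℕ} (h1 : 1 ≤ p) (h2 : p ≤ k + 1) (i' : Fin n) :
    (.u i' : BNode n k) ∈ nonDescSet (edge1 n k C1) (cNode i p) := by
  constructor
  · intro hr
    obtain ⟨q, hq1, hq2, hv⟩ := edge1_desc i C1 h1 h2 _ hr
    rcases Nat.lt_or_ge q (k + 1) with hlt | hge
    · rw [cNode_x i (by omega) (by omega)] at hv; exact absurd hv (by simp)
    · have : q = k + 1 := by omega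
      subst this; rw [cNode_z] at hv; exact absurd hv (by simp)
  · intro he
    have := edge1_parent_uniq i C1 h1 h2 _ he
    rcases Nat.eq_zero_or_pos (p - 1) with h0 | h0
    · rw [h0, cNode_zero] at this; exact absurd this (by simp)
    · rw [cNode_x i (by omega) (by omega)] at this; exact absurd this (by simp)

theorem edge1_nd_chain {p t : ℕ} (h1 : 1 ≤ p) (h2 : p ≤ k + 1) (ht : t < p - 1) :
    cNode (n := n) (k := k) i t ∈ nonDescSet (edge1 n k C1) (cNode i p) := by
  constructor
  · intro hr
    obtain ⟨q, hq1, hq2, hv⟩ := edge1_desc i C1 h1 h2 _ hr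
    have := cNode_inj i (by omega : t ≤ k + 1) hq2 hv
    omega
  · intro he
    have := edge1_parent_uniq i C1 h1 h2 _ he
    have := cNode_inj i (by omega : t ≤ k + 1) (by omega : p - 1 ≤ k + 1) this
    omega

end Graph

section Net2
variable {n k : ℕ} (i : Fin n) (C2 : Finset (Fin n)) (A : Fin k → Finset (Fin n))
  (b : Fin k → Fin n)

theorem edge2_y_no_out (c : BNode n k) : ¬ edge2 n k C2 A b (.y i) c := by
  cases c <;> exact id

theorem edge2_y_desc (v : BNode n k) (h : Relation.ReflTransGen (edge2 n k C2 A b) (.y i) v) :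
    v = .y i := by
  induction h with
  | refl => rfl
  | tail hab hbc ih =>
    rw [ih] at hbc
    exact absurd hbc (edge2_y_no_out i C2 A b _)

theorem edge2_y_parent_mem : edge2 n k C2 A b (.z i) (.y i) := rfl

theorem edge2_y_parent_uniq (v : BNode n k) (hv : edge2 n k C2 A b v (.y i)) : v = .z i := by
  cases v with
  | u i' => exact absurd hv id
  | y i' => exact absurd hv id
  | z i' => exact congrArg BNode.z hv
  | x i' j' => exact absurd hv id

theorem edge2_y_nd_u (i' : Fin n) :
    (.u i' : BNode n k) ∈ nonDescSet (edge2 n k C2 A b) (.y i) :=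
  ⟨fun hr => absurd (edge2_y_desc i C2 A b _ hr) (by simp), fun he => he⟩

theorem edge2_y_nd_x (i'' : Fin n) (j' : Fin k) :
    (.x i'' j' : BNode n k) ∈ nonDescSet (edge2 n k C2 A b) (.y i) :=
  ⟨fun hr => absurd (edge2_y_desc i C2 A b _ hr) (by simp), fun he => he⟩

end Net2

section Main
variable {n k : ℕ} {Ω : Type} {μ : PMF Ω}

/-- the value of the `t`-th chain variable as a function of the tuple value -/
def chainW (k : ℕ) (w : (Fin k → ℕ) × ℕ × ℕ) (t : ℕ) : ℕ :=
  if t = 0 then w.2.1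
  else if h : 1 ≤ t ∧ t ≤ k then w.1 ⟨t - 1, by omega⟩
  else if t = k + 1 then w.2.2 else 0

theorem chainW_get_0 (w : (Fin k → ℕ) × ℕ × ℕ) : chainW k w 0 = w.2.1 := rfl

theorem chainW_get_x (w : (Fin k → ℕ) × ℕ × ℕ) (t' : Fin k) :
    chainW k w ((t' : ℕ) + 1) = w.1 t' := by
  unfold chainW
  rw [if_neg (by omega), dif_pos ⟨by omega, by have := t'.isLt; omega⟩]
  rfl

theorem chainW_get_z (w : (Fin k → ℕ) × ℕ × ℕ) : chainW k w (k + 1) = w.2.2 := by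
  unfold chainW
  rw [if_neg (by omega), dif_neg (by omega), if_pos rfl]

theorem chainW_tuple (X : BNode n k → Ω → ℕ) (i : Fin n) (ω : Ω) {t : ℕ} (ht : t ≤ k + 1) :
    chainW k (tupleVar X i ω) t = X (cNode i t) ω := by
  unfold chainW cNode
  by_cases h0 : t = 0
  · rw [if_pos h0, if_pos h0]; rfl
  · rw [if_neg h0, if_neg h0]
    by_cases h1 : 1 ≤ t ∧ t ≤ k
    · rw [dif_pos h1, dif_pos h1]; rfl
    · rw [dif_neg h1, dif_neg h1, if_pos (by omega : t = k + 1)]; rfl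

/-- the joint of the chain variables at positions `< j` -/
def Lseg (X : BNode n k → Ω → ℕ) (i : Fin n) (j : ℕ) : Ω → (ℕ → ℕ) :=
  fun ω t => if t < j then chainW k (tupleVar X i ω) t else 0

/-- the joint of the chain variables at positions in `(j, m]` -/
def Mseg (X : BNode n k → Ω → ℕ) (i : Fin n) (j m : ℕ) : Ω → (ℕ → ℕ) :=
  fun ω t => if j < t ∧ t ≤ m then chainW k (tupleVar X i ω) t else 0

theorem lm1 {C1 : Finset (Fin n)} (X : BNode n k → Ω → ℕ) (i : Fin n)
    (h1 : SatisfiesBN μ X (edge1 n k C1)) (hk : 1 ≤ k) {p : ℕ} (hp1 : 1 ≤ p)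
    (hp2 : p ≤ k + 1) :
    CondIndep μ (X (cNode i p)) (fun ω => (Ujoint X ω, Lseg X i (p - 1) ω))
      (X (cNode i (p - 1))) := by
  have h := h1 (cNode i p)
  have hpmem : cNode (k := k) i (p - 1) ∈ parentSet (edge1 n k C1) (cNode i p) :=
    edge1_parent_mem i C1 hk hp1 hp2
  have step1 := h.recodeC
      (fun f : ((parentSet (edge1 n k C1) (cNode i p)) → ℕ) => f ⟨cNode i (p - 1), hpmem⟩)
      (fun m => fun _ => m)
      (fun ω => by
        funext v
        show X (cNode i (p - 1)) ω = X v.1 ω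
        rw [edge1_parent_uniq i C1 hp1 hp2 v.1 v.2])
  have step2 : CondIndep μ (X (cNode i p))
      (fun ω => fun v : nonDescSet (edge1 n k C1) (cNode i p) => X v.1 ω)
      (X (cNode i (p - 1))) := step1.congr₃ (fun ω => rfl)
  exact step2.margB
    (fun f => ((fun i' => f ⟨.u i', edge1_nd_u i C1 hp1 hp2 i'⟩ : Fin n → ℕ),
      fun t => if htt : t < p - 1 then f ⟨cNode i t, edge1_nd_chain i C1 hp1 hp2 htt⟩ else 0))
    (fun ω => by
      refine Prod.ext rfl ?_
      funext t
      dsimp only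
      unfold Lseg
      by_cases htt : t < p - 1
      · rw [if_pos htt, dif_pos htt]
        exact chainW_tuple X i ω (by omega)
      · rw [if_neg htt, dif_neg htt])

theorem net2_H1 {C2 : Finset (Fin n)} {A : Fin k → Finset (Fin n)} {b : Fin k → Fin n}
    (X : BNode n k → Ω → ℕ) (i : Fin n) (h2 : SatisfiesBN μ X (edge2 n k C2 A b)) :
    CondIndep μ (fun ω => (Ujoint X ω, fun j' : Fin k => X (.x i j') ω))
      (X (.y i)) (X (.z i)) := by
  have h := h2 (.y i)
  have hpmem : (.z i : BNode n k) ∈ parentSet (edge2 n k C2 A b) (.y i) :=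
    edge2_y_parent_mem i C2 A b
  have step1 := h.recodeC
      (fun f : ((parentSet (edge2 n k C2 A b) (.y i)) → ℕ) => f ⟨.z i, hpmem⟩)
      (fun m => fun _ => m)
      (fun ω => by
        funext v
        show X (.z i) ω = X v.1 ω
        rw [edge2_y_parent_uniq i C2 A b v.1 v.2])
  have step2 : CondIndep μ (X (.y i))
      (fun ω => fun v : nonDescSet (edge2 n k C2 A b) (.y i) => X v.1 ω)
      (X (.z i)) := step1.congr₃ (fun ω => rfl)
  have step3 : CondIndep μ (X (.y i))
      (fun ω => ((fun i' => X (.u i') ω : Fin n → ℕ), (fun j' => X (.x i j') ω : Fin k → ℕ)))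
      (X (.z i)) := step2.margB
    (fun f => ((fun i' => f ⟨.u i', edge2_y_nd_u i C2 A b i'⟩ : Fin n → ℕ),
      (fun j' => f ⟨.x i j', edge2_y_nd_x i C2 A b i j'⟩ : Fin k → ℕ)))
    (fun ω => rfl)
  exact step3.symm

theorem claim1 {C1 : Finset (Fin n)} (X : BNode n k → Ω → ℕ) (i : Fin n)
    (h1 : SatisfiesBN μ X (edge1 n k C1)) (hk : 1 ≤ k) {j : ℕ} (hj : j ≤ k + 1) :
    ∀ m, j ≤ m → m ≤ k + 1 →
      CondIndep μ (fun ω => (Ujoint X ω, Lseg X i j ω)) (Mseg X i j m) (X (cNode i j)) := by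
  have hbase : CondIndep μ (fun ω => (Ujoint X ω, Lseg X i j ω)) (Mseg X i j j)
      (X (cNode i j)) := by
    refine (condIndep_const (fun _ => (0 : ℕ)) _ _).congr₂ (fun ω => funext fun t => ?_)
    show (0 : ℕ) = Mseg X i j j ω t
    unfold Mseg
    rw [if_neg (by omega)]
  intro m
  induction m with
  | zero =>
    intro hjm _
    have hj0 : j = 0 := by omega
    subst hj0
    exact hbase
  | succ m ih =>
    intro hjm hm
    rcases Nat.eq_or_lt_of_le hjm with he | hlt
    · subst he
      exact hbase
    · have hjm2 : j ≤ m := by omega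
      have ihm := ih hjm2 (by omega)
      have lm := lm1 X i h1 hk (p := m + 1) (by omega) (by omega)
      simp only [Nat.add_sub_cancel] at lm
      have st2 : CondIndep μ (X (cNode i (m + 1)))
          (fun ω => ((Ujoint X ω, Lseg X i j ω),
            fun t => if j ≤ t ∧ t < m then chainW k (tupleVar X i ω) t else 0))
          (X (cNode i m)) := lm.margB
        (fun uf : (Fin n → ℕ) × (ℕ → ℕ) =>
          ((uf.1, fun t => if t < j then uf.2 t else 0),
            fun t => if j ≤ t ∧ t < m then uf.2 t else 0))
        (fun ω => by
          refine Prod.ext (Prod.ext rfl ?_) ?_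
          · funext t
            show Lseg X i j ω t = if t < j then Lseg X i m ω t else 0
            unfold Lseg
            by_cases h : t < j
            · rw [if_pos h, if_pos h, if_pos (by omega)]
            · rw [if_neg h, if_neg h]
          · funext t
            show (if j ≤ t ∧ t < m then chainW k (tupleVar X i ω) t else 0)
                = if j ≤ t ∧ t < m then Lseg X i m ω t else 0
            unfold Lseg
            by_cases h : j ≤ t ∧ t < m
            · rw [if_pos h, if_pos h, if_pos (by omega)]
            · rw [if_neg h, if_neg h])
      have st3 := st2.weakUnion
      have st4 : CondIndep μ (X (cNode i (m + 1)))
          (fun ω => (Ujoint X ω, Lseg X i j ω))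
          (fun ω => (Mseg X i j m ω, X (cNode i j) ω)) := by
        have r := st3.recodeC
          (fun sx : (ℕ → ℕ) × ℕ =>
            ((fun t => if j < t ∧ t < m then sx.1 t else if j < t ∧ t = m then sx.2 else 0),
              if j < m then sx.1 j else sx.2))
          (fun mx : (ℕ → ℕ) × ℕ =>
            ((fun t => if j ≤ t ∧ t < m then (if t = j then mx.2 else mx.1 t) else 0),
              if j < m then mx.1 m else mx.2))
          (fun ω => by
            try dsimp only
            refine Prod.ext (funext fun t => ?_) ?_
            · try dsimp only
              split_ifs <;> first | rfl | omega | (congr 1; omega)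
            · try dsimp only
              split_ifs <;> first | rfl | omega | (congr 1; omega))
        refine r.congr₃ (fun ω => ?_)
        try dsimp only
        refine Prod.ext (funext fun t => ?_) ?_
        · show _ = Mseg X i j m ω t
          unfold Mseg
          try dsimp only
          split_ifs <;>
            first
              | rfl
              | omega
              | exact chainW_tuple X i ω (by omega)
              | exact (chainW_tuple X i ω (by omega)).symm
              | (rw [show t = m from by omega]
                 exact chainW_tuple X i ω (by omega))
              | (rw [show t = m from by omega]
                 exact (chainW_tuple X i ω (by omega)).symm)
              | (congr 1; omega)
        · show _ = X (cNode i j) ω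
          try dsimp only
          split_ifs <;>
            first
              | exact chainW_tuple X i ω (by omega)
              | (exfalso; omega)
              | rw [show j = m from by omega]
      have st5 := st4.symm
      have st6 := ihm.contraction st5
      exact st6.margB
        (fun fv : (ℕ → ℕ) × ℕ => fun t => if t = m + 1 then fv.2 else fv.1 t)
        (fun ω => by
          funext t
          show Mseg X i j (m + 1) ω t
              = if t = m + 1 then X (cNode i (m + 1)) ω else Mseg X i j m ω t
          unfold Mseg
          by_cases h : t = m + 1
          · subst h
            rw [if_pos ⟨by omega, le_refl _⟩, if_pos rfl]
            exact chainW_tuple X i ω (by omega)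
          · rw [if_neg h]
            by_cases h2 : j < t ∧ t ≤ m
            · rw [if_pos (show j < t ∧ t ≤ m + 1 by omega), if_pos h2]
            · rw [if_neg (show ¬(j < t ∧ t ≤ m + 1) by omega), if_neg h2])

end Main

/-- Lemma 6 of the paper: Networks 1 and 2 imply that
`S(Y_i;U) =ι S(Z_i;U) =ι S(X_i^j;U) =ι T_i` for every `i, j`, where
`T_i = S((X_i^1,…,X_i^k,Y_i,Z_i); U)`; i.e. `T_i` is a minimal sufficient statistic of
each of `Y_i`, `Z_i` and `X_i^j` for `U`. -/
theorem networks_minSuffStat (n k : ℕ) (hn : 2 ≤ n) (hk : 1 ≤ k)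
    (C1 C2 : Finset (Fin n)) (hC : Disjoint C1 C2)
    (A : Fin k → Finset (Fin n)) (b : Fin k → Fin n) (hb : ∀ j, b j ∉ A j)
    (Ω : Type) (μ : PMF Ω) (X : BNode n k → Ω → ℕ)
    (hfin : ∀ v, FinSupp μ (X v))
    (h1 : SatisfiesBN μ X (edge1 n k C1))
    (h2 : SatisfiesBN μ X (edge2 n k C2 A b))
    (β : Fin n → Type) (T : ∀ i, Ω → β i)
    (hT : ∀ i, MinSuffStat μ (tupleVar X i) (Ujoint X) (T i)) :
    ∀ (i : Fin n) (j : Fin k),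
      MinSuffStat μ (X (.y i)) (Ujoint X) (T i) ∧
      MinSuffStat μ (X (.z i)) (Ujoint X) (T i) ∧
      MinSuffStat μ (X (.x i j)) (Ujoint X) (T i) := by
  intro i j
  -- the master tuple variable and the three keys
  have keyYc : CondIndep μ (Ujoint X) (tupleVar X i) (X (cNode i 0)) := by
    have cm := claim1 X i h1 hk (by omega : (0 : ℕ) ≤ k + 1) (k + 1) (by omega) (le_refl _)
    have cm2 : CondIndep μ (Ujoint X) (Mseg X i 0 (k + 1)) (X (cNode i 0)) :=
      cm.margA Prod.fst (fun ω => rfl)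
    refine cm2.bundle (W := tupleVar X i)
      (fun w => (fun t => if 0 < t ∧ t ≤ k + 1 then chainW k w t else 0))
      (fun w => w.2.1) (fun ω => rfl) (fun ω => by rw [cNode_zero]; rfl) ?_
    intro w w' hB hC
    have hy : w.2.1 = w'.2.1 := hC
    have hz : w.2.2 = w'.2.2 := by
      have h := congrFun hB (k + 1)
      rw [if_pos ⟨by omega, le_refl _⟩, if_pos ⟨by omega, le_refl _⟩] at h
      rw [chainW_get_z, chainW_get_z] at h
      exact h
    have hx : w.1 = w'.1 := by
      funext t'
      have h := congrFun hB ((t' : ℕ) + 1)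
      rw [if_pos ⟨by omega, by have := t'.isLt; omega⟩,
        if_pos ⟨by omega, by have := t'.isLt; omega⟩] at h
      rw [chainW_get_x, chainW_get_x] at h
      exact h
    exact Prod.ext hx (Prod.ext hy hz)
  have keyY : CondIndep μ (Ujoint X) (tupleVar X i) (X (.y i)) :=
    keyYc.congr₃ (fun ω => by rw [cNode_zero])
  have keyZ : CondIndep μ (Ujoint X) (tupleVar X i) (fun ω => (tupleVar X i ω).2.2) := by
    refine transferB (Ujoint X) (tupleVar X i) Prod.fst (fun w => w.2.2) (fun w => w.2.1) id
      (fun w w' hA hC hD => Prod.ext hA (Prod.ext hD hC)) ?_ ?_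
    · exact net2_H1 X i h2
    · exact keyY.congr₃ (fun ω => rfl)
  have keyX : CondIndep μ (Ujoint X) (tupleVar X i) (fun ω => (tupleVar X i ω).1 j) := by
    have cmj := claim1 X i h1 hk (show (j : ℕ) + 1 ≤ k + 1 by have := j.isLt; omega)
      (k + 1) (by have := j.isLt; omega) (le_refl _)
    have H1X : CondIndep μ (fun ω => (Ujoint X ω, Lseg X i ((j : ℕ) + 1) ω))
        (Mseg X i ((j : ℕ) + 1) (k + 1)) (fun ω => (tupleVar X i ω).1 j) :=
      cmj.congr₃ (fun ω => by rw [cNode_x i (by omega) (by have := j.isLt; omega)]; rfl)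
    refine transferB (Ujoint X) (tupleVar X i)
      (fun w => (fun t => if t < (j : ℕ) + 1 then chainW k w t else 0))
      (fun w => w.1 j)
      (fun w => (fun t => if (j : ℕ) + 1 < t ∧ t ≤ k + 1 then chainW k w t else 0))
      (fun f => f (k + 1)) ?_ ?_ ?_
    · intro w w' hA hC hD
      have hy : w.2.1 = w'.2.1 := by
        have h := congrFun hA 0
        rw [if_pos (by omega), if_pos (by omega)] at h
        exact h
      have hz : w.2.2 = w'.2.2 := by
        have h := congrFun hD (k + 1)
        rw [if_pos ⟨by have := j.isLt; omega, le_refl _⟩,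
          if_pos ⟨by have := j.isLt; omega, le_refl _⟩] at h
        rw [chainW_get_z, chainW_get_z] at h
        exact h
      have hx : w.1 = w'.1 := by
        funext t'
        rcases lt_trichotomy (t' : ℕ) (j : ℕ) with hlt | heq | hgt
        · have h := congrFun hA ((t' : ℕ) + 1)
          rw [if_pos (by omega), if_pos (by omega)] at h
          rw [chainW_get_x, chainW_get_x] at h
          exact h
        · have ht : t' = j := Fin.ext heq
          rw [ht]; exact hC
        · have h := congrFun hD ((t' : ℕ) + 1)
          rw [if_pos ⟨by omega, by have := t'.isLt; omega⟩,
            if_pos ⟨by omega, by have := t'.isLt; omega⟩] at h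
          rw [chainW_get_x, chainW_get_x] at h
          exact h
      exact Prod.ext hx (Prod.ext hy hz)
    · exact H1X
    · refine keyZ.congr₃ (fun ω => ?_)
      show (tupleVar X i ω).2.2
          = if (j : ℕ) + 1 < k + 1 ∧ k + 1 ≤ k + 1 then chainW k (tupleVar X i ω) (k + 1) else 0
      rw [if_pos ⟨by have := j.isLt; omega, le_refl _⟩, chainW_get_z]
  refine ⟨?_, ?_, ?_⟩
  · exact main_wrap (fun w => w.2.1) (fun ω => rfl) keyY (hT i)
  · exact main_wrap (fun w => w.2.2) (fun ω => rfl) (keyZ.congr₃ fun ω => rfl) (hT i)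
  · exact main_wrap (fun w => w.1 j) (fun ω => rfl) (keyX.congr₃ fun ω => rfl) (hT i)


end Paper
end

section
/- Networks 1 and 2 imply that (T_i)_{i∈C_1} are mutually independent and (T_i)_{i∈C_2} are mutually independent; that is, for every joint distribution of the variables U_i, Y_i, Z_i, X_i^j satisfying both Network 1 and Network 2, the minimal sufficient statistics T_i with indices in C_1 are mutually independent, and likewise for C_2. -/
namespace Paper

namespace Aux

open scoped Classical

variable {Ω : Type} (μ : PMF Ω)

theorem pr_eq (P : Ω → Prop) : pr μ {ω | P ω} = ∑' ω, if P ω then μ ω else 0 := by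
  rw [pr, PMF.toOuterMeasure_apply]
  exact tsum_congr fun ω => by by_cases h : P ω <;> simp [Set.indicator, h]

theorem pr_congr {P Q : Ω → Prop} (h : ∀ ω, P ω ↔ Q ω) :
    pr μ {ω | P ω} = pr μ {ω | Q ω} := by
  have hs : {ω | P ω} = {ω | Q ω} := Set.ext h
  rw [pr, hs, ← pr]

theorem pr_congr_ae {P Q : Ω → Prop} (h : ∀ ω ∈ μ.support, (P ω ↔ Q ω)) :
    pr μ {ω | P ω} = pr μ {ω | Q ω} := by
  rw [pr_eq, pr_eq]
  refine tsum_congr fun ω => ?_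
  by_cases hμ : μ ω = 0
  · by_cases hp : P ω <;> by_cases hq : Q ω <;> simp [hp, hq, hμ]
  · have hh := h ω (by simpa [PMF.mem_support_iff] using hμ)
    by_cases hp : P ω
    · rw [if_pos hp, if_pos (hh.mp hp)]
    · rw [if_neg hp, if_neg (fun hq => hp (hh.mpr hq))]

theorem pr_mono {P Q : Ω → Prop} (h : ∀ ω, P ω → Q ω) :
    pr μ {ω | P ω} ≤ pr μ {ω | Q ω} := by
  rw [pr_eq, pr_eq]
  refine Summable.tsum_le_tsum (fun ω => ?_) ENNReal.summable ENNReal.summable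
  by_cases hp : P ω
  · rw [if_pos hp, if_pos (h ω hp)]
  · simp [hp]

theorem pr_true : pr μ {ω | True} = 1 := by
  rw [pr_eq]; simpa using μ.tsum_coe

theorem pr_false : pr μ {ω | False} = 0 := by
  rw [pr_eq]; simp

theorem pr_le_one (P : Ω → Prop) : pr μ {ω | P ω} ≤ 1 := by
  have := pr_mono μ (P := P) (Q := fun _ => True) (fun ω _ => trivial)
  rwa [pr_true] at this

theorem pr_ne_top (P : Ω → Prop) : pr μ {ω | P ω} ≠ ⊤ :=
  ne_top_of_le_ne_top ENNReal.one_ne_top (pr_le_one μ P)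

theorem pr_marg {γ : Type} (W : Ω → γ) (P : Ω → Prop) :
    ∑' w, pr μ {ω | P ω ∧ W ω = w} = pr μ {ω | P ω} := by
  simp only [pr_eq]
  rw [ENNReal.tsum_comm]
  refine tsum_congr fun ω => ?_
  refine (tsum_eq_single (W ω) (fun w hw => if_neg (fun hc => hw (hc.2.symm)))).trans ?_
  by_cases hp : P ω <;> simp [hp]

theorem cancel {a b c : ENNReal} (h0 : c ≠ 0) (ht : c ≠ ⊤) (h : a * c = b * c) : a = b :=
  (ENNReal.mul_left_inj h0 ht).mp h


theorem pr_zero {P : Ω → Prop} (h : ∀ ω, ¬ P ω) : pr μ {ω | P ω} = 0 := by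
  rw [pr_congr μ (fun ω => iff_false_intro (h ω)), pr_false]

theorem pr_le_of_imp {P Q : Ω → Prop} (hq : pr μ {ω | Q ω} = 0) (h : ∀ ω, P ω → Q ω) :
    pr μ {ω | P ω} = 0 :=
  le_antisymm (le_trans (pr_mono μ h) (le_of_eq hq)) zero_le

variable {α β γ δ α' β' γ' : Type}

theorem indep_symm {A : Ω → α} {B : Ω → β} (h : Indep μ A B) : Indep μ B A := by
  intro b a
  have e : pr μ {ω | B ω = b ∧ A ω = a} = pr μ {ω | A ω = a ∧ B ω = b} :=
    pr_congr μ (fun ω => and_comm)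
  rw [e, h a b, mul_comm]

theorem indep_comap_right {A : Ω → α} {B : Ω → β} (f : β → β')
    (h : Indep μ A B) : Indep μ A (fun ω => f (B ω)) := by
  intro a b'
  rw [← pr_marg μ B (fun ω => A ω = a ∧ f (B ω) = b'),
      ← pr_marg μ B (fun ω => f (B ω) = b'), ← ENNReal.tsum_mul_left]
  refine tsum_congr fun w => ?_
  by_cases hw : f w = b'
  · have e1 : pr μ {ω | (A ω = a ∧ f (B ω) = b') ∧ B ω = w}
        = pr μ {ω | A ω = a ∧ B ω = w} := pr_congr μ (fun ω => by
      constructor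
      · rintro ⟨⟨ha, _⟩, hb⟩; exact ⟨ha, hb⟩
      · rintro ⟨ha, hb⟩; exact ⟨⟨ha, by rw [hb, hw]⟩, hb⟩)
    have e2 : pr μ {ω | f (B ω) = b' ∧ B ω = w} = pr μ {ω | B ω = w} :=
      pr_congr μ (fun ω => by
        constructor
        · rintro ⟨_, hb⟩; exact hb
        · intro hb; exact ⟨by rw [hb, hw], hb⟩)
    rw [e1, e2, h a w]
  · have z1 : pr μ {ω | (A ω = a ∧ f (B ω) = b') ∧ B ω = w} = 0 :=
      pr_zero μ (fun ω hc => hw (by rw [← hc.2]; exact hc.1.2))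
    have z2 : pr μ {ω | f (B ω) = b' ∧ B ω = w} = 0 :=
      pr_zero μ (fun ω hc => hw (by rw [← hc.2]; exact hc.1))
    rw [z1, z2, mul_zero]

theorem indep_comap_left {A : Ω → α} {B : Ω → β} (f : α → α')
    (h : Indep μ A B) : Indep μ (fun ω => f (A ω)) B :=
  indep_symm μ (indep_comap_right μ f (indep_symm μ h))

theorem condIndep_symm {A : Ω → α} {B : Ω → β} {C : Ω → γ}
    (h : CondIndep μ A B C) : CondIndep μ B A C := by
  intro b a c
  have e : pr μ {ω | B ω = b ∧ A ω = a ∧ C ω = c}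
      = pr μ {ω | A ω = a ∧ B ω = b ∧ C ω = c} := pr_congr μ (fun ω => and_left_comm)
  rw [e, h a b c, mul_comm]

theorem condIndep_comap_right {A : Ω → α} {B : Ω → β} {C : Ω → γ} (f : β → β')
    (h : CondIndep μ A B C) : CondIndep μ A (fun ω => f (B ω)) C := by
  intro a b' c
  rw [← pr_marg μ B (fun ω => A ω = a ∧ f (B ω) = b' ∧ C ω = c),
      ← pr_marg μ B (fun ω => f (B ω) = b' ∧ C ω = c),
      ← ENNReal.tsum_mul_right, ← ENNReal.tsum_mul_left]
  refine tsum_congr fun w => ?_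
  by_cases hw : f w = b'
  · have e1 : pr μ {ω | (A ω = a ∧ f (B ω) = b' ∧ C ω = c) ∧ B ω = w}
        = pr μ {ω | A ω = a ∧ B ω = w ∧ C ω = c} := pr_congr μ (fun ω => by
      constructor
      · rintro ⟨⟨ha, _, hc⟩, hb⟩; exact ⟨ha, hb, hc⟩
      · rintro ⟨ha, hb, hc⟩; exact ⟨⟨ha, by rw [hb, hw], hc⟩, hb⟩)
    have e2 : pr μ {ω | (f (B ω) = b' ∧ C ω = c) ∧ B ω = w}
        = pr μ {ω | B ω = w ∧ C ω = c} := pr_congr μ (fun ω => by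
      constructor
      · rintro ⟨⟨_, hc⟩, hb⟩; exact ⟨hb, hc⟩
      · rintro ⟨hb, hc⟩; exact ⟨⟨by rw [hb, hw], hc⟩, hb⟩)
    rw [e1, e2, h a w c]
  · have z1 : pr μ {ω | (A ω = a ∧ f (B ω) = b' ∧ C ω = c) ∧ B ω = w} = 0 :=
      pr_zero μ (fun ω hc => hw (by rw [← hc.2]; exact hc.1.2.1))
    have z2 : pr μ {ω | (f (B ω) = b' ∧ C ω = c) ∧ B ω = w} = 0 :=
      pr_zero μ (fun ω hc => hw (by rw [← hc.2]; exact hc.1.1))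
    rw [z1, z2, zero_mul, mul_zero]

theorem condIndep_comap_left {A : Ω → α} {B : Ω → β} {C : Ω → γ} (f : α → α')
    (h : CondIndep μ A B C) : CondIndep μ (fun ω => f (A ω)) B C :=
  condIndep_symm μ (condIndep_comap_right μ f (condIndep_symm μ h))

theorem condIndep_congr_cond {A : Ω → α} {B : Ω → β} {C : Ω → γ} {C' : Ω → γ'}
    (f : γ → γ') (g : γ' → γ) (hf : ∀ ω, C' ω = f (C ω)) (hg : ∀ ω, C ω = g (C' ω))
    (h : CondIndep μ A B C) : CondIndep μ A B C' := by
  intro a b z'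
  by_cases hex : ∃ ω₀, C' ω₀ = z'
  · obtain ⟨ω₀, hω₀⟩ := hex
    have key : ∀ ω, C' ω = z' ↔ C ω = g z' := by
      intro ω
      constructor
      · intro hcc; rw [hg ω, hcc]
      · intro hcc
        rw [hf ω, hcc, ← hω₀, ← hg ω₀, ← hf ω₀]
    have e1 : pr μ {ω | A ω = a ∧ B ω = b ∧ C' ω = z'}
        = pr μ {ω | A ω = a ∧ B ω = b ∧ C ω = g z'} :=
      pr_congr μ (fun ω => by rw [key ω])
    have e2 : pr μ {ω | C' ω = z'} = pr μ {ω | C ω = g z'} :=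
      pr_congr μ (fun ω => key ω)
    have e3 : pr μ {ω | A ω = a ∧ C' ω = z'} = pr μ {ω | A ω = a ∧ C ω = g z'} :=
      pr_congr μ (fun ω => by rw [key ω])
    have e4 : pr μ {ω | B ω = b ∧ C' ω = z'} = pr μ {ω | B ω = b ∧ C ω = g z'} :=
      pr_congr μ (fun ω => by rw [key ω])
    rw [e1, e2, e3, e4]
    exact h a b (g z')
  · push_neg at hex
    have z1 : pr μ {ω | A ω = a ∧ B ω = b ∧ C' ω = z'} = 0 :=
      pr_zero μ (fun ω hc => hex ω hc.2.2)
    have z2 : pr μ {ω | A ω = a ∧ C' ω = z'} = 0 :=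
      pr_zero μ (fun ω hc => hex ω hc.2)
    rw [z1, z2, zero_mul, zero_mul]

theorem condIndep_of_const_cond {A : Ω → α} {B : Ω → β} {C : Ω → γ}
    (z₀ : γ) (hz : ∀ ω, C ω = z₀) (h : CondIndep μ A B C) : Indep μ A B := by
  intro a b
  have h1 := h a b z₀
  have e0 : pr μ {ω | C ω = z₀} = 1 := by
    rw [pr_congr μ (fun ω => iff_true_intro (hz ω)), pr_true]
  have e1 : pr μ {ω | A ω = a ∧ B ω = b ∧ C ω = z₀} = pr μ {ω | A ω = a ∧ B ω = b} :=
    pr_congr μ (fun ω => ⟨fun hc => ⟨hc.1, hc.2.1⟩, fun hc => ⟨hc.1, hc.2, hz ω⟩⟩)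
  have e2 : pr μ {ω | A ω = a ∧ C ω = z₀} = pr μ {ω | A ω = a} :=
    pr_congr μ (fun ω => ⟨fun hc => hc.1, fun hc => ⟨hc, hz ω⟩⟩)
  have e3 : pr μ {ω | B ω = b ∧ C ω = z₀} = pr μ {ω | B ω = b} :=
    pr_congr μ (fun ω => ⟨fun hc => hc.1, fun hc => ⟨hc, hz ω⟩⟩)
  rw [e0, e1, e2, e3, mul_one] at h1
  exact h1

theorem condIndep_const_mid {A : Ω → α} {B : Ω → β} {C : Ω → γ}
    (b₀ : β) (hb : ∀ ω, B ω = b₀) : CondIndep μ A B C := by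
  intro a b c
  by_cases hbb : b = b₀
  · subst hbb
    have e1 : pr μ {ω | A ω = a ∧ B ω = b ∧ C ω = c} = pr μ {ω | A ω = a ∧ C ω = c} :=
      pr_congr μ (fun ω => ⟨fun hc => ⟨hc.1, hc.2.2⟩, fun hc => ⟨hc.1, hb ω, hc.2⟩⟩)
    have e2 : pr μ {ω | B ω = b ∧ C ω = c} = pr μ {ω | C ω = c} :=
      pr_congr μ (fun ω => ⟨fun hc => hc.2, fun hc => ⟨hb ω, hc⟩⟩)
    rw [e1, e2]
  · have z1 : pr μ {ω | A ω = a ∧ B ω = b ∧ C ω = c} = 0 :=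
      pr_zero μ (fun ω hc => hbb (by rw [← hc.2.1, hb ω]))
    have z2 : pr μ {ω | B ω = b ∧ C ω = c} = 0 :=
      pr_zero μ (fun ω hc => hbb (by rw [← hc.1, hb ω]))
    rw [z1, z2, zero_mul, mul_zero]

theorem condIndep_pair_cond {A : Ω → α} {B : Ω → β} {C : Ω → γ}
    (h : CondIndep μ A B C) : CondIndep μ A (fun ω => (B ω, C ω)) C := by
  rintro a ⟨b, c'⟩ c
  by_cases hcc : c' = c
  · subst hcc
    have e1 : pr μ {ω | A ω = a ∧ (B ω, C ω) = (b, c') ∧ C ω = c'}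
        = pr μ {ω | A ω = a ∧ B ω = b ∧ C ω = c'} := pr_congr μ (fun ω => by
      constructor
      · rintro ⟨ha, hbc, hc⟩
        exact ⟨ha, (Prod.ext_iff.mp hbc).1, hc⟩
      · rintro ⟨ha, hb, hc⟩
        exact ⟨ha, by rw [hb, hc], hc⟩)
    have e2 : pr μ {ω | (B ω, C ω) = (b, c') ∧ C ω = c'}
        = pr μ {ω | B ω = b ∧ C ω = c'} := pr_congr μ (fun ω => by
      constructor
      · rintro ⟨hbc, hc⟩
        exact ⟨(Prod.ext_iff.mp hbc).1, hc⟩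
      · rintro ⟨hb, hc⟩
        exact ⟨by rw [hb, hc], hc⟩)
    rw [e1, e2]
    exact h a b c'
  · have z1 : pr μ {ω | A ω = a ∧ (B ω, C ω) = (b, c') ∧ C ω = c} = 0 :=
      pr_zero μ (fun ω hc => hcc (by
        have h2 := congrArg Prod.snd hc.2.1
        simp only [] at h2
        exact h2.symm.trans hc.2.2))
    have z2 : pr μ {ω | (B ω, C ω) = (b, c') ∧ C ω = c} = 0 :=
      pr_zero μ (fun ω hc => hcc (by
        have h2 := congrArg Prod.snd hc.1
        simp only [] at h2
        exact h2.symm.trans hc.2))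
    rw [z1, z2, zero_mul, mul_zero]


theorem condIndep_weakUnion {A : Ω → α} {B : Ω → β} {W : Ω → δ} {C : Ω → γ}
    (h : CondIndep μ A (fun ω => (B ω, W ω)) C) :
    CondIndep μ A B (fun ω => (C ω, W ω)) := by
  rintro a b ⟨c, w⟩
  have hW : CondIndep μ A W C := condIndep_comap_right μ Prod.snd h
  have E1 : pr μ {ω | A ω = a ∧ B ω = b ∧ (C ω, W ω) = (c, w)}
      = pr μ {ω | A ω = a ∧ B ω = b ∧ C ω = c ∧ W ω = w} :=
    pr_congr μ (fun ω => by simp)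
  have E2 : pr μ {ω | (C ω, W ω) = (c, w)} = pr μ {ω | C ω = c ∧ W ω = w} :=
    pr_congr μ (fun ω => by simp)
  have E3 : pr μ {ω | A ω = a ∧ (C ω, W ω) = (c, w)}
      = pr μ {ω | A ω = a ∧ C ω = c ∧ W ω = w} := pr_congr μ (fun ω => by simp)
  have E4 : pr μ {ω | B ω = b ∧ (C ω, W ω) = (c, w)}
      = pr μ {ω | B ω = b ∧ C ω = c ∧ W ω = w} := pr_congr μ (fun ω => by simp)
  rw [E1, E2, E3, E4]
  by_cases h0 : pr μ {ω | C ω = c} = 0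
  · have l1 : pr μ {ω | C ω = c ∧ W ω = w} = 0 := pr_le_of_imp μ h0 (fun ω hc => hc.1)
    have l2 : pr μ {ω | A ω = a ∧ C ω = c ∧ W ω = w} = 0 :=
      pr_le_of_imp μ h0 (fun ω hc => hc.2.1)
    rw [l1, l2, mul_zero, zero_mul]
  · have hi := h a (b, w) c
    have E5 : pr μ {ω | A ω = a ∧ (B ω, W ω) = (b, w) ∧ C ω = c}
        = pr μ {ω | A ω = a ∧ B ω = b ∧ C ω = c ∧ W ω = w} :=
      pr_congr μ (fun ω => by simp; tauto)
    have E6 : pr μ {ω | (B ω, W ω) = (b, w) ∧ C ω = c}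
        = pr μ {ω | B ω = b ∧ C ω = c ∧ W ω = w} := pr_congr μ (fun ω => by simp; tauto)
    rw [E5, E6] at hi
    have hii := hW a w c
    have E7 : pr μ {ω | A ω = a ∧ W ω = w ∧ C ω = c}
        = pr μ {ω | A ω = a ∧ C ω = c ∧ W ω = w} := pr_congr μ (fun ω => by tauto)
    have E8 : pr μ {ω | W ω = w ∧ C ω = c} = pr μ {ω | C ω = c ∧ W ω = w} :=
      pr_congr μ (fun ω => and_comm)
    rw [E7, E8] at hii
    refine cancel h0 (pr_ne_top μ _) ?_
    calc pr μ {ω | A ω = a ∧ B ω = b ∧ C ω = c ∧ W ω = w} * pr μ {ω | C ω = c ∧ W ω = w}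
          * pr μ {ω | C ω = c}
        = (pr μ {ω | A ω = a ∧ B ω = b ∧ C ω = c ∧ W ω = w} * pr μ {ω | C ω = c})
            * pr μ {ω | C ω = c ∧ W ω = w} := by ring
      _ = (pr μ {ω | A ω = a ∧ C ω = c} * pr μ {ω | B ω = b ∧ C ω = c ∧ W ω = w})
            * pr μ {ω | C ω = c ∧ W ω = w} := by rw [hi]
      _ = (pr μ {ω | A ω = a ∧ C ω = c} * pr μ {ω | C ω = c ∧ W ω = w})
            * pr μ {ω | B ω = b ∧ C ω = c ∧ W ω = w} := by ring
      _ = (pr μ {ω | A ω = a ∧ C ω = c ∧ W ω = w} * pr μ {ω | C ω = c})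
            * pr μ {ω | B ω = b ∧ C ω = c ∧ W ω = w} := by rw [hii]
      _ = pr μ {ω | A ω = a ∧ C ω = c ∧ W ω = w}
            * pr μ {ω | B ω = b ∧ C ω = c ∧ W ω = w} * pr μ {ω | C ω = c} := by ring

theorem condIndep_contract {A : Ω → α} {B : Ω → β} {N : Ω → δ} {C : Ω → γ}
    (h1 : CondIndep μ A B C) (h2 : CondIndep μ A N (fun ω => (C ω, B ω))) :
    CondIndep μ A (fun ω => (B ω, N ω)) C := by
  rintro a ⟨b, n⟩ c
  have E1 : pr μ {ω | A ω = a ∧ (B ω, N ω) = (b, n) ∧ C ω = c}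
      = pr μ {ω | A ω = a ∧ B ω = b ∧ N ω = n ∧ C ω = c} :=
    pr_congr μ (fun ω => by simp; tauto)
  have E2 : pr μ {ω | (B ω, N ω) = (b, n) ∧ C ω = c}
      = pr μ {ω | B ω = b ∧ N ω = n ∧ C ω = c} := pr_congr μ (fun ω => by simp; tauto)
  rw [E1, E2]
  by_cases h0 : pr μ {ω | B ω = b ∧ C ω = c} = 0
  · have l1 : pr μ {ω | A ω = a ∧ B ω = b ∧ N ω = n ∧ C ω = c} = 0 :=
      pr_le_of_imp μ h0 (fun ω hc => ⟨hc.2.1, hc.2.2.2⟩)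
    have l2 : pr μ {ω | B ω = b ∧ N ω = n ∧ C ω = c} = 0 :=
      pr_le_of_imp μ h0 (fun ω hc => ⟨hc.1, hc.2.2⟩)
    rw [l1, l2, mul_zero, zero_mul]
  · have hi := h2 a n (c, b)
    have E3 : pr μ {ω | A ω = a ∧ N ω = n ∧ (C ω, B ω) = (c, b)}
        = pr μ {ω | A ω = a ∧ B ω = b ∧ N ω = n ∧ C ω = c} :=
      pr_congr μ (fun ω => by simp; tauto)
    have E4 : pr μ {ω | (C ω, B ω) = (c, b)} = pr μ {ω | B ω = b ∧ C ω = c} :=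
      pr_congr μ (fun ω => by simp; tauto)
    have E5 : pr μ {ω | A ω = a ∧ (C ω, B ω) = (c, b)}
        = pr μ {ω | A ω = a ∧ B ω = b ∧ C ω = c} := pr_congr μ (fun ω => by simp; tauto)
    have E6 : pr μ {ω | N ω = n ∧ (C ω, B ω) = (c, b)}
        = pr μ {ω | B ω = b ∧ N ω = n ∧ C ω = c} := pr_congr μ (fun ω => by simp; tauto)
    rw [E3, E4, E5, E6] at hi
    have hj := h1 a b c
    refine cancel h0 (pr_ne_top μ _) ?_
    calc pr μ {ω | A ω = a ∧ B ω = b ∧ N ω = n ∧ C ω = c} * pr μ {ω | C ω = c}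
          * pr μ {ω | B ω = b ∧ C ω = c}
        = (pr μ {ω | A ω = a ∧ B ω = b ∧ N ω = n ∧ C ω = c}
            * pr μ {ω | B ω = b ∧ C ω = c}) * pr μ {ω | C ω = c} := by ring
      _ = (pr μ {ω | A ω = a ∧ B ω = b ∧ C ω = c}
            * pr μ {ω | B ω = b ∧ N ω = n ∧ C ω = c}) * pr μ {ω | C ω = c} := by rw [hi]
      _ = (pr μ {ω | A ω = a ∧ B ω = b ∧ C ω = c} * pr μ {ω | C ω = c})
            * pr μ {ω | B ω = b ∧ N ω = n ∧ C ω = c} := by ring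
      _ = (pr μ {ω | A ω = a ∧ C ω = c} * pr μ {ω | B ω = b ∧ C ω = c})
            * pr μ {ω | B ω = b ∧ N ω = n ∧ C ω = c} := by rw [hj]
      _ = pr μ {ω | A ω = a ∧ C ω = c} * pr μ {ω | B ω = b ∧ N ω = n ∧ C ω = c}
            * pr μ {ω | B ω = b ∧ C ω = c} := by ring

theorem indep_contract {C : Ω → γ} {N : Ω → δ} {O : Ω → α}
    (h1 : Indep μ C O) (h2 : CondIndep μ N O C) :
    Indep μ (fun ω => (C ω, N ω)) O := by
  rintro ⟨c, n⟩ o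
  have E1 : pr μ {ω | (C ω, N ω) = (c, n) ∧ O ω = o}
      = pr μ {ω | C ω = c ∧ N ω = n ∧ O ω = o} := pr_congr μ (fun ω => by simp; tauto)
  have E2 : pr μ {ω | (C ω, N ω) = (c, n)} = pr μ {ω | C ω = c ∧ N ω = n} :=
    pr_congr μ (fun ω => by simp)
  rw [E1, E2]
  by_cases h0 : pr μ {ω | C ω = c} = 0
  · have l1 : pr μ {ω | C ω = c ∧ N ω = n ∧ O ω = o} = 0 :=
      pr_le_of_imp μ h0 (fun ω hc => hc.1)
    have l2 : pr μ {ω | C ω = c ∧ N ω = n} = 0 := pr_le_of_imp μ h0 (fun ω hc => hc.1)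
    rw [l1, l2, zero_mul]
  · have hi := h2 n o c
    have E3 : pr μ {ω | N ω = n ∧ O ω = o ∧ C ω = c}
        = pr μ {ω | C ω = c ∧ N ω = n ∧ O ω = o} := pr_congr μ (fun ω => by tauto)
    have E4 : pr μ {ω | N ω = n ∧ C ω = c} = pr μ {ω | C ω = c ∧ N ω = n} :=
      pr_congr μ (fun ω => and_comm)
    have E5 : pr μ {ω | O ω = o ∧ C ω = c} = pr μ {ω | C ω = c ∧ O ω = o} :=
      pr_congr μ (fun ω => and_comm)
    rw [E3, E4, E5, h1 c o] at hi
    refine cancel h0 (pr_ne_top μ _) ?_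
    calc pr μ {ω | C ω = c ∧ N ω = n ∧ O ω = o} * pr μ {ω | C ω = c}
        = pr μ {ω | C ω = c ∧ N ω = n} * (pr μ {ω | C ω = c} * pr μ {ω | O ω = o}) := hi
      _ = pr μ {ω | C ω = c ∧ N ω = n} * pr μ {ω | O ω = o} * pr μ {ω | C ω = c} := by ring

theorem indep_transfer {A : Ω → α} {B : Ω → β} {A' : Ω → α'} {B' : Ω → β'}
    (h : Indep μ A B) (f : α → α') (g : β → β')
    (hA : ∀ ω ∈ μ.support, A' ω = f (A ω)) (hB : ∀ ω ∈ μ.support, B' ω = g (B ω)) :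
    Indep μ A' B' := by
  have h2 : Indep μ (fun ω => f (A ω)) (fun ω => g (B ω)) :=
    indep_comap_left μ f (indep_comap_right μ g h)
  intro a' b'
  have e1 : pr μ {ω | A' ω = a' ∧ B' ω = b'} = pr μ {ω | f (A ω) = a' ∧ g (B ω) = b'} :=
    pr_congr_ae μ (fun ω hω => by rw [hA ω hω, hB ω hω])
  have e2 : pr μ {ω | A' ω = a'} = pr μ {ω | f (A ω) = a'} :=
    pr_congr_ae μ (fun ω hω => by rw [hA ω hω])
  have e3 : pr μ {ω | B' ω = b'} = pr μ {ω | g (B ω) = b'} :=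
    pr_congr_ae μ (fun ω hω => by rw [hB ω hω])
  rw [e1, e2, e3]
  exact h2 a' b'

theorem indep_congr {A A' : Ω → α} {B B' : Ω → β}
    (hA : ∀ ω, A ω = A' ω) (hB : ∀ ω, B ω = B' ω) (h : Indep μ A B) : Indep μ A' B' := by
  intro a b
  have e1 : pr μ {ω | A' ω = a ∧ B' ω = b} = pr μ {ω | A ω = a ∧ B ω = b} :=
    pr_congr μ (fun ω => by rw [hA ω, hB ω])
  have e2 : pr μ {ω | A' ω = a} = pr μ {ω | A ω = a} := pr_congr μ (fun ω => by rw [hA ω])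
  have e3 : pr μ {ω | B' ω = b} = pr μ {ω | B ω = b} := pr_congr μ (fun ω => by rw [hB ω])
  rw [e1, e2, e3]
  exact h a b

theorem condIndep_congr {A A' : Ω → α} {B B' : Ω → β} {C C' : Ω → γ}
    (hA : ∀ ω, A ω = A' ω) (hB : ∀ ω, B ω = B' ω) (hC : ∀ ω, C ω = C' ω)
    (h : CondIndep μ A B C) : CondIndep μ A' B' C' := by
  intro a b c
  have e1 : pr μ {ω | A' ω = a ∧ B' ω = b ∧ C' ω = c}
      = pr μ {ω | A ω = a ∧ B ω = b ∧ C ω = c} :=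
    pr_congr μ (fun ω => by rw [hA ω, hB ω, hC ω])
  have e2 : pr μ {ω | C' ω = c} = pr μ {ω | C ω = c} := pr_congr μ (fun ω => by rw [hC ω])
  have e3 : pr μ {ω | A' ω = a ∧ C' ω = c} = pr μ {ω | A ω = a ∧ C ω = c} :=
    pr_congr μ (fun ω => by rw [hA ω, hC ω])
  have e4 : pr μ {ω | B' ω = b ∧ C' ω = c} = pr μ {ω | B ω = b ∧ C ω = c} :=
    pr_congr μ (fun ω => by rw [hB ω, hC ω])
  rw [e1, e2, e3, e4]
  exact h a b c

end Aux

namespace Aux2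

theorem reach_mem {ν : Type} {E : ν → ν → Prop} {R : ν → Prop}
    (hcl : ∀ a c, R a → E a c → R c) {w v : ν}
    (h : Relation.ReflTransGen E w v) (hw : R w) : R v := by
  induction h with
  | refl => exact hw
  | tail _ e ih => exact hcl _ _ ih e

theorem not_reach {ν : Type} (E : ν → ν → Prop) (R : ν → Prop)
    (hcl : ∀ a c, R a → E a c → R c) {w v : ν} (hw : R w) (hv : ¬ R v) :
    ¬ Relation.ReflTransGen E w v := fun h => hv (reach_mem hcl h hw)

variable {n k : ℕ}

section N1
variable {C1 : Finset (Fin n)}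

def R1u (C1 : Finset (Fin n)) (i : Fin n) : BNode n k → Prop
  | .u i' => i' = i ∨ i' ∉ C1
  | .y i' => i' = i ∨ i' ∉ C1
  | .z i' => i' = i ∨ i' ∉ C1
  | .x i' _ => i' = i ∨ i' ∉ C1

theorem R1u_closed (i : Fin n) : ∀ a c : BNode n k,
    R1u C1 i a → edge1 n k C1 a c → R1u C1 i c := by
  intro a c ha hac
  cases a <;> cases c <;> simp_all [edge1, R1u] <;> tauto

def R1y (i : Fin n) : BNode n k → Prop
  | .u _ => False
  | .y i' => i' = i
  | .z i' => i' = i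
  | .x i' _ => i' = i

theorem R1y_closed (i : Fin n) : ∀ a c : BNode n k,
    R1y i a → edge1 n k C1 a c → R1y i c := by
  intro a c ha hac
  cases a <;> cases c <;> simp_all [edge1, R1y] <;> tauto

def R1x (i : Fin n) (m : ℕ) : BNode n k → Prop
  | .u _ => False
  | .y _ => False
  | .z i' => i' = i
  | .x i' j => i' = i ∧ m ≤ (j : ℕ)

theorem R1x_closed (i : Fin n) (m : ℕ) : ∀ a c : BNode n k,
    R1x i m a → edge1 n k C1 a c → R1x i m c := by
  intro a c ha hac
  cases a with
  | u i1 => simp only [R1x] at ha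
  | y i1 => simp only [R1x] at ha
  | z i1 => cases c <;> simp only [edge1] at hac
  | x i1 j1 =>
    simp only [R1x] at ha
    obtain ⟨h1, h2⟩ := ha
    cases c with
    | u i2 => simp only [edge1] at hac
    | y i2 => simp only [edge1] at hac
    | z i2 =>
      obtain ⟨h3, -⟩ := hac
      exact h3.symm.trans h1
    | x i2 j2 =>
      obtain ⟨h3, h4⟩ := hac
      exact ⟨h3.symm.trans h1, by omega⟩

def R1z (i : Fin n) : BNode n k → Prop
  | .z i' => i' = i
  | _ => False

theorem R1z_closed (i : Fin n) : ∀ a c : BNode n k,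
    R1z i a → edge1 n k C1 a c → R1z i c := by
  intro a c ha hac
  cases a <;> cases c <;> simp_all [edge1, R1z]

theorem n1_no_parent_u {i : Fin n} (hi : i ∈ C1) (v : BNode n k) :
    ¬ edge1 n k C1 v (BNode.u i) := by
  cases v <;> simp_all [edge1] <;> tauto

theorem n1_parent_y (i : Fin n) (v : BNode n k) :
    edge1 n k C1 v (BNode.y i) ↔ v = BNode.u i := by
  cases v <;> simp_all [edge1]

theorem n1_parent_x0 (i : Fin n) {j : Fin k} (hj : (j : ℕ) = 0) (v : BNode n k) :
    edge1 n k C1 v (BNode.x i j) ↔ v = BNode.y i := by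
  cases v <;> simp_all [edge1] <;> omega

theorem n1_parent_xs (i : Fin n) {j j' : Fin k} (hj : (j : ℕ) = (j' : ℕ) + 1)
    (v : BNode n k) : edge1 n k C1 v (BNode.x i j) ↔ v = BNode.x i j' := by
  cases v with
  | x i'' j'' =>
    simp_all [edge1]
    intro _
    constructor
    · intro h; exact Fin.ext (by omega)
    · intro h; subst h; omega
  | _ => simp_all [edge1] <;> omega

theorem n1_parent_z (i : Fin n) (v : BNode n k) :
    edge1 n k C1 v (BNode.z i) ↔ ∃ j : Fin k, (j : ℕ) = k - 1 ∧ v = BNode.x i j := by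
  cases v <;> simp [edge1] <;> tauto

-- nondescendant memberships
theorem n1_nd_u {i j : Fin n} (hi : i ∈ C1) (hj : j ∈ C1) (hne : j ≠ i)
    {v : BNode n k} (hv : ¬ R1u C1 i v) :
    v ∈ nonDescSet (edge1 n k C1) (BNode.u i) :=
  ⟨not_reach _ _ (R1u_closed i) (Or.inl rfl) hv, n1_no_parent_u hi v⟩

theorem n1_nd_y {i : Fin n} {v : BNode n k} (hv : ¬ R1y i v)
    (hv2 : v ≠ BNode.u i) : v ∈ nonDescSet (edge1 n k C1) (BNode.y i) :=
  ⟨not_reach _ _ (R1y_closed i) rfl hv, fun he => hv2 ((n1_parent_y i v).mp he)⟩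

theorem n1_nd_x {i : Fin n} {j : Fin k} {v : BNode n k} (hv : ¬ R1x i (j : ℕ) v)
    (hv2 : ¬ edge1 n k C1 v (BNode.x i j)) :
    v ∈ nonDescSet (edge1 n k C1) (BNode.x i j) :=
  ⟨not_reach _ _ (R1x_closed i (j : ℕ)) ⟨rfl, le_refl _⟩ hv, hv2⟩

theorem n1_nd_z {i : Fin n} {v : BNode n k} (hv : ¬ R1z i v)
    (hv2 : ¬ edge1 n k C1 v (BNode.z i)) :
    v ∈ nonDescSet (edge1 n k C1) (BNode.z i) :=
  ⟨not_reach _ _ (R1z_closed i) rfl hv, hv2⟩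

end N1

section N2
variable {C2 : Finset (Fin n)} {A : Fin k → Finset (Fin n)} {b : Fin k → Fin n}

def R2u (C2 : Finset (Fin n)) (i : Fin n) : BNode n k → Prop
  | .u i' => i' = i ∨ i' ∉ C2
  | .z i' => i' = i ∨ i' ∉ C2
  | .y i' => i' = i ∨ i' ∉ C2
  | .x _ _ => True

theorem R2u_closed (i : Fin n) : ∀ a c : BNode n k,
    R2u C2 i a → edge2 n k C2 A b a c → R2u C2 i c := by
  intro a c ha hac
  cases a <;> cases c <;> simp_all [edge2, R2u] <;> tauto

def R2z (i : Fin n) : BNode n k → Prop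
  | .z i' => i' = i
  | .y i' => i' = i
  | _ => False

theorem R2z_closed (i : Fin n) : ∀ a c : BNode n k,
    R2z i a → edge2 n k C2 A b a c → R2z i c := by
  intro a c ha hac
  cases a <;> cases c <;> simp_all [edge2, R2z]

def R2y (i : Fin n) : BNode n k → Prop
  | .y i' => i' = i
  | _ => False

theorem R2y_closed (i : Fin n) : ∀ a c : BNode n k,
    R2y i a → edge2 n k C2 A b a c → R2y i c := by
  intro a c ha hac
  cases a <;> cases c <;> simp_all [edge2, R2y]

theorem n2_no_parent_u {i : Fin n} (hi : i ∈ C2) (v : BNode n k) :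
    ¬ edge2 n k C2 A b v (BNode.u i) := by
  cases v <;> simp_all [edge2] <;> tauto

theorem n2_parent_z (i : Fin n) (v : BNode n k) :
    edge2 n k C2 A b v (BNode.z i) ↔ v = BNode.u i := by
  cases v <;> simp_all [edge2]

theorem n2_parent_y (i : Fin n) (v : BNode n k) :
    edge2 n k C2 A b v (BNode.y i) ↔ v = BNode.z i := by
  cases v <;> simp_all [edge2]

theorem n2_nd_u {i : Fin n} (hi : i ∈ C2) {v : BNode n k} (hv : ¬ R2u C2 i v) :
    v ∈ nonDescSet (edge2 n k C2 A b) (BNode.u i) :=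
  ⟨not_reach _ _ (R2u_closed i) (Or.inl rfl) hv, n2_no_parent_u hi v⟩

theorem n2_nd_z {i : Fin n} {v : BNode n k} (hv : ¬ R2z i v) (hv2 : v ≠ BNode.u i) :
    v ∈ nonDescSet (edge2 n k C2 A b) (BNode.z i) :=
  ⟨not_reach _ _ (R2z_closed i) rfl hv, fun he => hv2 ((n2_parent_z i v).mp he)⟩

theorem n2_nd_y {i : Fin n} {v : BNode n k} (hv : ¬ R2y i v) (hv2 : v ≠ BNode.z i) :
    v ∈ nonDescSet (edge2 n k C2 A b) (BNode.y i) :=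
  ⟨not_reach _ _ (R2y_closed i) rfl hv, fun he => hv2 ((n2_parent_y i v).mp he)⟩

end N2
end Aux2


namespace Aux3

open Aux Aux2

variable {n k : ℕ} {C1 C2 : Finset (Fin n)} {A : Fin k → Finset (Fin n)} {b : Fin k → Fin n}
variable {Ω : Type} (μ : PMF Ω) (X : BNode n k → Ω → ℕ)

/-- masked chain prefix -/
def Em (X : BNode n k → Ω → ℕ) (i : Fin n) (m : ℕ) : Ω → (Fin k → ℕ) :=
  fun ω j => if (j : ℕ) < m then X (BNode.x i j) ω else 0

theorem y_suff (hk : 1 ≤ k) (h1 : SatisfiesBN μ X (edge1 n k C1)) (i : Fin n) :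
    CondIndep μ (Ujoint X) (tupleVar X i) (fun ω => X (BNode.y i) ω) := by
  classical
  have key : ∀ m, m ≤ k →
      CondIndep μ (Ujoint X) (Em X i m) (fun ω => X (BNode.y i) ω) := by
    intro m
    induction m with
    | zero =>
      intro _
      exact condIndep_const_mid μ (fun _ => (0 : ℕ))
        (fun ω => funext fun j => by simp [Em])
    | succ m ih =>
      intro hmk
      have hm : m < k := hmk
      have Hm := ih (Nat.le_of_lt hm)
      have s6 : CondIndep μ (Ujoint X) (fun ω => X (BNode.x i ⟨m, hm⟩) ω)
          (fun ω => (X (BNode.y i) ω, Em X i m ω)) := by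
        rcases Nat.eq_zero_or_pos m with hm0 | hm0
        · subst hm0
          have pfu : ∀ i' : Fin n,
              (BNode.u i') ∈ nonDescSet (edge1 n k C1) (BNode.x i ⟨0, hm⟩) :=
            fun i' => n1_nd_x (fun h => h) (fun h => h)
          have s2 : CondIndep μ (fun ω => X (BNode.x i ⟨0, hm⟩) ω) (Ujoint X)
              (fun ω => fun v : parentSet (edge1 n k C1) (BNode.x i ⟨0, hm⟩) => X v.1 ω) :=
            condIndep_comap_right μ
              (fun (g : nonDescSet (edge1 n k C1) (BNode.x i ⟨0, hm⟩) → ℕ) =>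
                (fun i' => g ⟨BNode.u i', pfu i'⟩ : Fin n → ℕ)) (h1 (BNode.x i ⟨0, hm⟩))
          have pfy : BNode.y i ∈ parentSet (edge1 n k C1) (BNode.x i ⟨0, hm⟩) :=
            (n1_parent_x0 (C1 := C1) i rfl (BNode.y i)).mpr rfl
          have s3 : CondIndep μ (fun ω => X (BNode.x i ⟨0, hm⟩) ω) (Ujoint X)
              (fun ω => (X (BNode.y i) ω, Em X i 0 ω)) := by
            refine condIndep_congr_cond μ
              (fun (p : parentSet (edge1 n k C1) (BNode.x i ⟨0, hm⟩) → ℕ) =>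
                ((p ⟨BNode.y i, pfy⟩, fun _ => 0) : ℕ × (Fin k → ℕ)))
              (fun q _ => q.1) (fun ω => ?_) (fun ω => ?_) s2
            · exact congrArg₂ Prod.mk rfl (funext fun j => by simp [Em])
            · funext v
              obtain ⟨vv, hv⟩ := v
              have hvv : vv = BNode.y i := (n1_parent_x0 (C1 := C1) i rfl vv).mp hv
              subst hvv
              rfl
          exact condIndep_symm μ s3
        · -- m ≥ 1
          have hm1k : m - 1 < k := by omega
          have hjs : ((⟨m, hm⟩ : Fin k) : ℕ) = ((⟨m - 1, hm1k⟩ : Fin k) : ℕ) + 1 := by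
            show m = m - 1 + 1; omega
          have pfu : ∀ i' : Fin n,
              (BNode.u i') ∈ nonDescSet (edge1 n k C1) (BNode.x i ⟨m, hm⟩) :=
            fun i' => n1_nd_x (fun h => h) (fun h => h)
          have pfy : BNode.y i ∈ nonDescSet (edge1 n k C1) (BNode.x i ⟨m, hm⟩) :=
            n1_nd_x (fun h => h) (fun h => (show m ≠ 0 by omega) h.2)
          have pfx : ∀ j : Fin k, (j : ℕ) < m - 1 →
              BNode.x i j ∈ nonDescSet (edge1 n k C1) (BNode.x i ⟨m, hm⟩) :=
            fun j hj => n1_nd_x (fun h => (show ¬ (m ≤ (j : ℕ)) by omega) h.2)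
              (fun h => (show ¬ (m = (j : ℕ) + 1) by omega) h.2)
          have s2 : CondIndep μ (fun ω => X (BNode.x i ⟨m, hm⟩) ω)
              (fun ω => (Ujoint X ω, (X (BNode.y i) ω,
                (fun j : Fin k => if h : (j : ℕ) < m - 1 then X (BNode.x i j) ω else 0))))
              (fun ω => fun v : parentSet (edge1 n k C1) (BNode.x i ⟨m, hm⟩) => X v.1 ω) :=
            condIndep_comap_right μ
              (fun (g : nonDescSet (edge1 n k C1) (BNode.x i ⟨m, hm⟩) → ℕ) =>
                ((fun i' => g ⟨BNode.u i', pfu i'⟩ : Fin n → ℕ),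
                 (g ⟨BNode.y i, pfy⟩,
                  fun j : Fin k => if h : (j : ℕ) < m - 1 then g ⟨BNode.x i j, pfx j h⟩ else 0)))
              (h1 (BNode.x i ⟨m, hm⟩))
          have s2' : CondIndep μ (fun ω => X (BNode.x i ⟨m, hm⟩) ω)
              (fun ω => (Ujoint X ω, (X (BNode.y i) ω, Em X i (m - 1) ω)))
              (fun ω => fun v : parentSet (edge1 n k C1) (BNode.x i ⟨m, hm⟩) => X v.1 ω) := by
            refine condIndep_congr μ (fun ω => rfl) (fun ω => ?_) (fun ω => rfl) s2
            refine congrArg₂ Prod.mk rfl (congrArg₂ Prod.mk rfl (funext fun j => ?_))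
            by_cases hj : (j : ℕ) < m - 1 <;> simp [Em, hj]
          have pfp : BNode.x i ⟨m - 1, hm1k⟩ ∈ parentSet (edge1 n k C1) (BNode.x i ⟨m, hm⟩) :=
            (n1_parent_xs (C1 := C1) i hjs _).mpr rfl
          have s3 : CondIndep μ (fun ω => X (BNode.x i ⟨m, hm⟩) ω)
              (fun ω => (Ujoint X ω, (X (BNode.y i) ω, Em X i (m - 1) ω)))
              (fun ω => X (BNode.x i ⟨m - 1, hm1k⟩) ω) := by
            refine condIndep_congr_cond μ
              (fun (p : parentSet (edge1 n k C1) (BNode.x i ⟨m, hm⟩) → ℕ) => p ⟨_, pfp⟩)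
              (fun (q : ℕ) _ => q) (fun ω => rfl) (fun ω => ?_) s2'
            funext v
            obtain ⟨vv, hv⟩ := v
            have hvv : vv = BNode.x i ⟨m - 1, hm1k⟩ := (n1_parent_xs (C1 := C1) i hjs vv).mp hv
            subst hvv
            rfl
          have s4 : CondIndep μ (fun ω => X (BNode.x i ⟨m, hm⟩) ω) (Ujoint X)
              (fun ω => (X (BNode.x i ⟨m - 1, hm1k⟩) ω,
                (X (BNode.y i) ω, Em X i (m - 1) ω))) :=
            condIndep_weakUnion μ s3
          have s5 : CondIndep μ (fun ω => X (BNode.x i ⟨m, hm⟩) ω) (Ujoint X)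
              (fun ω => (X (BNode.y i) ω, Em X i m ω)) := by
            refine condIndep_congr_cond μ
              (fun (q : ℕ × (ℕ × (Fin k → ℕ))) =>
                ((q.2.1, fun j : Fin k => if (j : ℕ) < m - 1 then q.2.2 j
                  else if (j : ℕ) < m then q.1 else 0) : ℕ × (Fin k → ℕ)))
              (fun (q : ℕ × (Fin k → ℕ)) =>
                ((q.2 ⟨m - 1, hm1k⟩, (q.1, fun j : Fin k => if (j : ℕ) < m - 1 then q.2 j else 0)) :
                  ℕ × (ℕ × (Fin k → ℕ))))
              (fun ω => ?_) (fun ω => ?_) s4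
            · refine congrArg₂ Prod.mk rfl (funext fun j => ?_)
              by_cases hj1 : (j : ℕ) < m - 1
              · have hj2 : (j : ℕ) < m := by omega
                simp [Em, hj1, hj2]
              · by_cases hj2 : (j : ℕ) < m
                · have hje : j = ⟨m - 1, hm1k⟩ := Fin.ext (show (j : ℕ) = m - 1 by omega)
                  subst hje
                  simp [Em, hj1, hj2]
                · simp [Em, hj1, hj2]
            · refine congrArg₂ Prod.mk ?_ (congrArg₂ Prod.mk rfl (funext fun j => ?_))
              · have hlt : ((⟨m - 1, hm1k⟩ : Fin k) : ℕ) < m := by simp; omega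
                simp [Em, hlt]
              · by_cases hj1 : (j : ℕ) < m - 1
                · have hj2 : (j : ℕ) < m := by omega
                  simp [Em, hj1, hj2]
                · simp [Em, hj1]
          exact condIndep_symm μ s5
      have s7 : CondIndep μ (Ujoint X)
          (fun ω => (Em X i m ω, X (BNode.x i ⟨m, hm⟩) ω)) (fun ω => X (BNode.y i) ω) :=
        condIndep_contract μ Hm s6
      have s8 := condIndep_comap_right μ
        (fun (q : (Fin k → ℕ) × ℕ) =>
          (fun j : Fin k => if (j : ℕ) < m then q.1 j
            else if (j : ℕ) < m + 1 then q.2 else 0 : Fin k → ℕ)) s7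
      refine condIndep_congr μ (fun ω => rfl) (fun ω => funext fun j => ?_) (fun ω => rfl) s8
      by_cases hj1 : (j : ℕ) < m
      · have hj2 : (j : ℕ) < m + 1 := by omega
        simp [Em, hj1, hj2]
      · by_cases hj2 : (j : ℕ) < m + 1
        · have hje : j = ⟨m, hm⟩ := Fin.ext (show (j : ℕ) = m by omega)
          subst hje
          simp [Em, hj1, hj2]
        · simp [Em, hj1, hj2]
  -- z step
  have Hk := key k (le_refl k)
  have hk1 : k - 1 < k := by omega
  have pfu : ∀ i' : Fin n, (BNode.u i') ∈ nonDescSet (edge1 n k C1) (BNode.z i) :=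
    fun i' => n1_nd_z (fun h => h) (fun h => h)
  have pfy : BNode.y i ∈ nonDescSet (edge1 n k C1) (BNode.z i) :=
    n1_nd_z (fun h => h) (fun h => h)
  have pfx : ∀ j : Fin k, (j : ℕ) < k - 1 →
      BNode.x i j ∈ nonDescSet (edge1 n k C1) (BNode.z i) :=
    fun j hj => n1_nd_z (fun h => h) (fun h => (show ¬ ((j : ℕ) = k - 1) by omega) h.2)
  have s2 : CondIndep μ (fun ω => X (BNode.z i) ω)
      (fun ω => (Ujoint X ω, (X (BNode.y i) ω,
        (fun j : Fin k => if h : (j : ℕ) < k - 1 then X (BNode.x i j) ω else 0))))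
      (fun ω => fun v : parentSet (edge1 n k C1) (BNode.z i) => X v.1 ω) :=
    condIndep_comap_right μ
      (fun (g : nonDescSet (edge1 n k C1) (BNode.z i) → ℕ) =>
        ((fun i' => g ⟨BNode.u i', pfu i'⟩ : Fin n → ℕ),
         (g ⟨BNode.y i, pfy⟩,
          fun j : Fin k => if h : (j : ℕ) < k - 1 then g ⟨BNode.x i j, pfx j h⟩ else 0)))
      (h1 (BNode.z i))
  have s2' : CondIndep μ (fun ω => X (BNode.z i) ω)
      (fun ω => (Ujoint X ω, (X (BNode.y i) ω, Em X i (k - 1) ω)))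
      (fun ω => fun v : parentSet (edge1 n k C1) (BNode.z i) => X v.1 ω) := by
    refine condIndep_congr μ (fun ω => rfl) (fun ω => ?_) (fun ω => rfl) s2
    refine congrArg₂ Prod.mk rfl (congrArg₂ Prod.mk rfl (funext fun j => ?_))
    by_cases hj : (j : ℕ) < k - 1 <;> simp [Em, hj]
  have pfp : BNode.x i ⟨k - 1, hk1⟩ ∈ parentSet (edge1 n k C1) (BNode.z i) :=
    (n1_parent_z (C1 := C1) i _).mpr ⟨⟨k - 1, hk1⟩, rfl, rfl⟩
  have s3 : CondIndep μ (fun ω => X (BNode.z i) ω)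
      (fun ω => (Ujoint X ω, (X (BNode.y i) ω, Em X i (k - 1) ω)))
      (fun ω => X (BNode.x i ⟨k - 1, hk1⟩) ω) := by
    refine condIndep_congr_cond μ
      (fun (p : parentSet (edge1 n k C1) (BNode.z i) → ℕ) => p ⟨_, pfp⟩)
      (fun (q : ℕ) _ => q) (fun ω => rfl) (fun ω => ?_) s2'
    funext v
    obtain ⟨vv, hv⟩ := v
    obtain ⟨j0, hj0, hvv⟩ := (n1_parent_z (C1 := C1) i vv).mp hv
    have hje : j0 = ⟨k - 1, hk1⟩ := Fin.ext hj0
    subst hvv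
    subst hje
    rfl
  have s4 : CondIndep μ (fun ω => X (BNode.z i) ω) (Ujoint X)
      (fun ω => (X (BNode.x i ⟨k - 1, hk1⟩) ω, (X (BNode.y i) ω, Em X i (k - 1) ω))) :=
    condIndep_weakUnion μ s3
  have s5 : CondIndep μ (fun ω => X (BNode.z i) ω) (Ujoint X)
      (fun ω => (X (BNode.y i) ω, Em X i k ω)) := by
    refine condIndep_congr_cond μ
      (fun (q : ℕ × (ℕ × (Fin k → ℕ))) =>
        ((q.2.1, fun j : Fin k => if (j : ℕ) < k - 1 then q.2.2 j
          else if (j : ℕ) < k then q.1 else 0) : ℕ × (Fin k → ℕ)))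
      (fun (q : ℕ × (Fin k → ℕ)) =>
        ((q.2 ⟨k - 1, hk1⟩, (q.1, fun j : Fin k => if (j : ℕ) < k - 1 then q.2 j else 0)) :
          ℕ × (ℕ × (Fin k → ℕ))))
      (fun ω => ?_) (fun ω => ?_) s4
    · refine congrArg₂ Prod.mk rfl (funext fun j => ?_)
      by_cases hj1 : (j : ℕ) < k - 1
      · have hj2 : (j : ℕ) < k := by omega
        simp [Em, hj1, hj2]
      · by_cases hj2 : (j : ℕ) < k
        · have hje : j = ⟨k - 1, hk1⟩ := Fin.ext (show (j : ℕ) = k - 1 by omega)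
          subst hje
          simp [Em, hj1, hj2]
        · simp [Em, hj1, hj2]
    · refine congrArg₂ Prod.mk ?_ (congrArg₂ Prod.mk rfl (funext fun j => ?_))
      · have hlt : ((⟨k - 1, hk1⟩ : Fin k) : ℕ) < k := by show k - 1 < k; omega
        simp [Em, hlt]
      · by_cases hj1 : (j : ℕ) < k - 1
        · have hj2 : (j : ℕ) < k := by omega
          simp [Em, hj1, hj2]
        · simp [Em, hj1]
  have s7 : CondIndep μ (Ujoint X)
      (fun ω => (Em X i k ω, X (BNode.z i) ω)) (fun ω => X (BNode.y i) ω) :=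
    condIndep_contract μ Hk (condIndep_symm μ s5)
  have s8 : CondIndep μ (Ujoint X)
      (fun ω => ((Em X i k ω, X (BNode.z i) ω), X (BNode.y i) ω))
      (fun ω => X (BNode.y i) ω) :=
    condIndep_pair_cond μ s7
  have s9 := condIndep_comap_right μ
    (fun (q : ((Fin k → ℕ) × ℕ) × ℕ) => ((q.1.1, q.2, q.1.2) : (Fin k → ℕ) × ℕ × ℕ)) s8
  refine condIndep_congr μ (fun ω => rfl) (fun ω => ?_) (fun ω => rfl) s9
  refine congrArg₂ Prod.mk (funext fun j => ?_) rfl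
  simp [Em, j.isLt]

theorem y_indep1 (h1 : SatisfiesBN μ X (edge1 n k C1)) {i : Fin n} (hi : i ∈ C1) :
    Indep μ (fun ω => X (BNode.y i) ω)
      (fun ω => fun j : {j : Fin n // j ∈ C1 ∧ j ≠ i} => X (BNode.y j.1) ω) := by
  have pf1 : ∀ j : {j : Fin n // j ∈ C1 ∧ j ≠ i},
      BNode.u j.1 ∈ nonDescSet (edge1 n k C1) (BNode.u i) :=
    fun j => n1_nd_u hi j.2.1 j.2.2
      (by intro h; rcases h with h | h; exact j.2.2 h; exact h j.2.1)
  have pf2 : ∀ j : {j : Fin n // j ∈ C1 ∧ j ≠ i},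
      BNode.y j.1 ∈ nonDescSet (edge1 n k C1) (BNode.u i) :=
    fun j => n1_nd_u hi j.2.1 j.2.2
      (by intro h; rcases h with h | h; exact j.2.2 h; exact h j.2.1)
  have t1 : Indep μ (fun ω => X (BNode.u i) ω)
      (fun ω => fun v : nonDescSet (edge1 n k C1) (BNode.u i) => X v.1 ω) :=
    condIndep_of_const_cond μ (fun _ => (0 : ℕ))
      (fun ω => funext fun v => (n1_no_parent_u (k := k) hi v.1 v.2).elim) (h1 (BNode.u i))
  have t2 : Indep μ (fun ω => X (BNode.u i) ω)
      (fun ω => fun j : {j : Fin n // j ∈ C1 ∧ j ≠ i} =>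
        ((X (BNode.u j.1) ω, X (BNode.y j.1) ω) : ℕ × ℕ)) :=
    indep_comap_right μ
      (fun (g : nonDescSet (edge1 n k C1) (BNode.u i) → ℕ) =>
        fun j : {j : Fin n // j ∈ C1 ∧ j ≠ i} =>
          (g ⟨BNode.u j.1, pf1 j⟩, g ⟨BNode.y j.1, pf2 j⟩)) t1
  have pf3 : ∀ j : {j : Fin n // j ∈ C1 ∧ j ≠ i},
      BNode.u j.1 ∈ nonDescSet (edge1 n k C1) (BNode.y i) :=
    fun j => n1_nd_y (fun h => h) (by intro h; injection h with h2; exact j.2.2 h2)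
  have pf4 : ∀ j : {j : Fin n // j ∈ C1 ∧ j ≠ i},
      BNode.y j.1 ∈ nonDescSet (edge1 n k C1) (BNode.y i) :=
    fun j => n1_nd_y (fun h => j.2.2 h) (fun h => by cases h)
  have t3 : CondIndep μ (fun ω => X (BNode.y i) ω)
      (fun ω => fun j : {j : Fin n // j ∈ C1 ∧ j ≠ i} =>
        ((X (BNode.u j.1) ω, X (BNode.y j.1) ω) : ℕ × ℕ))
      (fun ω => fun v : parentSet (edge1 n k C1) (BNode.y i) => X v.1 ω) :=
    condIndep_comap_right μ
      (fun (g : nonDescSet (edge1 n k C1) (BNode.y i) → ℕ) =>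
        fun j : {j : Fin n // j ∈ C1 ∧ j ≠ i} =>
          (g ⟨BNode.u j.1, pf3 j⟩, g ⟨BNode.y j.1, pf4 j⟩)) (h1 (BNode.y i))
  have pfp : BNode.u i ∈ parentSet (edge1 n k C1) (BNode.y i) :=
    (n1_parent_y (k := k) (C1 := C1) i (BNode.u i)).mpr rfl
  have t4 : CondIndep μ (fun ω => X (BNode.y i) ω)
      (fun ω => fun j : {j : Fin n // j ∈ C1 ∧ j ≠ i} =>
        ((X (BNode.u j.1) ω, X (BNode.y j.1) ω) : ℕ × ℕ))
      (fun ω => X (BNode.u i) ω) := by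
    refine condIndep_congr_cond μ
      (fun (p : parentSet (edge1 n k C1) (BNode.y i) → ℕ) => p ⟨_, pfp⟩)
      (fun (q : ℕ) _ => q) (fun ω => rfl) (fun ω => ?_) t3
    funext v
    obtain ⟨vv, hv⟩ := v
    have hvv : vv = BNode.u i := (n1_parent_y (k := k) (C1 := C1) i vv).mp hv
    subst hvv
    rfl
  have t5 : Indep μ (fun ω => (X (BNode.u i) ω, X (BNode.y i) ω))
      (fun ω => fun j : {j : Fin n // j ∈ C1 ∧ j ≠ i} =>
        ((X (BNode.u j.1) ω, X (BNode.y j.1) ω) : ℕ × ℕ)) :=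
    indep_contract μ t2 t4
  have t6 := indep_comap_left μ Prod.snd t5
  exact indep_comap_right μ
    (fun (o : {j : Fin n // j ∈ C1 ∧ j ≠ i} → ℕ × ℕ) => fun j => (o j).2) t6

theorem y_indep2 (h2 : SatisfiesBN μ X (edge2 n k C2 A b)) {i : Fin n} (hi : i ∈ C2) :
    Indep μ (fun ω => X (BNode.y i) ω)
      (fun ω => fun j : {j : Fin n // j ∈ C2 ∧ j ≠ i} => X (BNode.y j.1) ω) := by
  have pf1 : ∀ j : {j : Fin n // j ∈ C2 ∧ j ≠ i},
      BNode.u j.1 ∈ nonDescSet (edge2 n k C2 A b) (BNode.u i) :=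
    fun j => n2_nd_u hi (by intro h; rcases h with h | h; exact j.2.2 h; exact h j.2.1)
  have pf2 : ∀ j : {j : Fin n // j ∈ C2 ∧ j ≠ i},
      BNode.z j.1 ∈ nonDescSet (edge2 n k C2 A b) (BNode.u i) :=
    fun j => n2_nd_u hi (by intro h; rcases h with h | h; exact j.2.2 h; exact h j.2.1)
  have pf3 : ∀ j : {j : Fin n // j ∈ C2 ∧ j ≠ i},
      BNode.y j.1 ∈ nonDescSet (edge2 n k C2 A b) (BNode.u i) :=
    fun j => n2_nd_u hi (by intro h; rcases h with h | h; exact j.2.2 h; exact h j.2.1)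
  have t1 : Indep μ (fun ω => X (BNode.u i) ω)
      (fun ω => fun v : nonDescSet (edge2 n k C2 A b) (BNode.u i) => X v.1 ω) :=
    condIndep_of_const_cond μ (fun _ => (0 : ℕ))
      (fun ω => funext fun v => (n2_no_parent_u (A := A) (b := b) hi v.1 v.2).elim) (h2 (BNode.u i))
  have t2 : Indep μ (fun ω => X (BNode.u i) ω)
      (fun ω => fun j : {j : Fin n // j ∈ C2 ∧ j ≠ i} =>
        ((X (BNode.u j.1) ω, X (BNode.z j.1) ω, X (BNode.y j.1) ω) : ℕ × ℕ × ℕ)) :=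
    indep_comap_right μ
      (fun (g : nonDescSet (edge2 n k C2 A b) (BNode.u i) → ℕ) =>
        fun j : {j : Fin n // j ∈ C2 ∧ j ≠ i} =>
          (g ⟨BNode.u j.1, pf1 j⟩, g ⟨BNode.z j.1, pf2 j⟩, g ⟨BNode.y j.1, pf3 j⟩)) t1
  -- z node
  have pf4 : ∀ j : {j : Fin n // j ∈ C2 ∧ j ≠ i},
      BNode.u j.1 ∈ nonDescSet (edge2 n k C2 A b) (BNode.z i) :=
    fun j => n2_nd_z (fun h => h) (by intro h; injection h with h2; exact j.2.2 h2)
  have pf5 : ∀ j : {j : Fin n // j ∈ C2 ∧ j ≠ i},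
      BNode.z j.1 ∈ nonDescSet (edge2 n k C2 A b) (BNode.z i) :=
    fun j => n2_nd_z (fun h => j.2.2 h) (fun h => by cases h)
  have pf6 : ∀ j : {j : Fin n // j ∈ C2 ∧ j ≠ i},
      BNode.y j.1 ∈ nonDescSet (edge2 n k C2 A b) (BNode.z i) :=
    fun j => n2_nd_z (fun h => j.2.2 h) (fun h => by cases h)
  have t3 : CondIndep μ (fun ω => X (BNode.z i) ω)
      (fun ω => fun j : {j : Fin n // j ∈ C2 ∧ j ≠ i} =>
        ((X (BNode.u j.1) ω, X (BNode.z j.1) ω, X (BNode.y j.1) ω) : ℕ × ℕ × ℕ))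
      (fun ω => fun v : parentSet (edge2 n k C2 A b) (BNode.z i) => X v.1 ω) :=
    condIndep_comap_right μ
      (fun (g : nonDescSet (edge2 n k C2 A b) (BNode.z i) → ℕ) =>
        fun j : {j : Fin n // j ∈ C2 ∧ j ≠ i} =>
          (g ⟨BNode.u j.1, pf4 j⟩, g ⟨BNode.z j.1, pf5 j⟩, g ⟨BNode.y j.1, pf6 j⟩))
      (h2 (BNode.z i))
  have pfpz : BNode.u i ∈ parentSet (edge2 n k C2 A b) (BNode.z i) :=
    (n2_parent_z (k := k) (C2 := C2) (A := A) (b := b) i (BNode.u i)).mpr rfl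
  have t4 : CondIndep μ (fun ω => X (BNode.z i) ω)
      (fun ω => fun j : {j : Fin n // j ∈ C2 ∧ j ≠ i} =>
        ((X (BNode.u j.1) ω, X (BNode.z j.1) ω, X (BNode.y j.1) ω) : ℕ × ℕ × ℕ))
      (fun ω => X (BNode.u i) ω) := by
    refine condIndep_congr_cond μ
      (fun (p : parentSet (edge2 n k C2 A b) (BNode.z i) → ℕ) => p ⟨_, pfpz⟩)
      (fun (q : ℕ) _ => q) (fun ω => rfl) (fun ω => ?_) t3
    funext v
    obtain ⟨vv, hv⟩ := v
    have hvv : vv = BNode.u i := (n2_parent_z (k := k) (C2 := C2) (A := A) (b := b) i vv).mp hv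
    subst hvv
    rfl
  have t5 : Indep μ (fun ω => (X (BNode.u i) ω, X (BNode.z i) ω))
      (fun ω => fun j : {j : Fin n // j ∈ C2 ∧ j ≠ i} =>
        ((X (BNode.u j.1) ω, X (BNode.z j.1) ω, X (BNode.y j.1) ω) : ℕ × ℕ × ℕ)) :=
    indep_contract μ t2 t4
  -- y node
  have pf7 : ∀ j : {j : Fin n // j ∈ C2 ∧ j ≠ i},
      BNode.u j.1 ∈ nonDescSet (edge2 n k C2 A b) (BNode.y i) :=
    fun j => n2_nd_y (fun h => h) (fun h => by cases h)
  have pf8 : ∀ j : {j : Fin n // j ∈ C2 ∧ j ≠ i},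
      BNode.z j.1 ∈ nonDescSet (edge2 n k C2 A b) (BNode.y i) :=
    fun j => n2_nd_y (fun h => h) (by intro h; injection h with h2; exact j.2.2 h2)
  have pf9 : ∀ j : {j : Fin n // j ∈ C2 ∧ j ≠ i},
      BNode.y j.1 ∈ nonDescSet (edge2 n k C2 A b) (BNode.y i) :=
    fun j => n2_nd_y (fun h => j.2.2 h) (fun h => by cases h)
  have pf10 : BNode.u i ∈ nonDescSet (edge2 n k C2 A b) (BNode.y i) :=
    n2_nd_y (fun h => h) (fun h => by cases h)
  have t6 : CondIndep μ (fun ω => X (BNode.y i) ω)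
      (fun ω => ((fun j : {j : Fin n // j ∈ C2 ∧ j ≠ i} =>
        ((X (BNode.u j.1) ω, X (BNode.z j.1) ω, X (BNode.y j.1) ω) : ℕ × ℕ × ℕ)),
        X (BNode.u i) ω))
      (fun ω => fun v : parentSet (edge2 n k C2 A b) (BNode.y i) => X v.1 ω) :=
    condIndep_comap_right μ
      (fun (g : nonDescSet (edge2 n k C2 A b) (BNode.y i) → ℕ) =>
        ((fun j : {j : Fin n // j ∈ C2 ∧ j ≠ i} =>
          (g ⟨BNode.u j.1, pf7 j⟩, g ⟨BNode.z j.1, pf8 j⟩, g ⟨BNode.y j.1, pf9 j⟩)),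
         g ⟨BNode.u i, pf10⟩))
      (h2 (BNode.y i))
  have pfpy : BNode.z i ∈ parentSet (edge2 n k C2 A b) (BNode.y i) :=
    (n2_parent_y (k := k) (C2 := C2) (A := A) (b := b) i (BNode.z i)).mpr rfl
  have t7 : CondIndep μ (fun ω => X (BNode.y i) ω)
      (fun ω => ((fun j : {j : Fin n // j ∈ C2 ∧ j ≠ i} =>
        ((X (BNode.u j.1) ω, X (BNode.z j.1) ω, X (BNode.y j.1) ω) : ℕ × ℕ × ℕ)),
        X (BNode.u i) ω))
      (fun ω => X (BNode.z i) ω) := by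
    refine condIndep_congr_cond μ
      (fun (p : parentSet (edge2 n k C2 A b) (BNode.y i) → ℕ) => p ⟨_, pfpy⟩)
      (fun (q : ℕ) _ => q) (fun ω => rfl) (fun ω => ?_) t6
    funext v
    obtain ⟨vv, hv⟩ := v
    have hvv : vv = BNode.z i := (n2_parent_y (k := k) (C2 := C2) (A := A) (b := b) i vv).mp hv
    subst hvv
    rfl
  have t8 : CondIndep μ (fun ω => X (BNode.y i) ω)
      (fun ω => fun j : {j : Fin n // j ∈ C2 ∧ j ≠ i} =>
        ((X (BNode.u j.1) ω, X (BNode.z j.1) ω, X (BNode.y j.1) ω) : ℕ × ℕ × ℕ))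
      (fun ω => (X (BNode.z i) ω, X (BNode.u i) ω)) :=
    condIndep_weakUnion μ t7
  have t9 : CondIndep μ (fun ω => X (BNode.y i) ω)
      (fun ω => fun j : {j : Fin n // j ∈ C2 ∧ j ≠ i} =>
        ((X (BNode.u j.1) ω, X (BNode.z j.1) ω, X (BNode.y j.1) ω) : ℕ × ℕ × ℕ))
      (fun ω => (X (BNode.u i) ω, X (BNode.z i) ω)) :=
    condIndep_congr_cond μ (fun q : ℕ × ℕ => (q.2, q.1)) (fun q : ℕ × ℕ => (q.2, q.1)) (fun ω => rfl) (fun ω => rfl) t8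
  have t10 : Indep μ
      (fun ω => ((X (BNode.u i) ω, X (BNode.z i) ω), X (BNode.y i) ω))
      (fun ω => fun j : {j : Fin n // j ∈ C2 ∧ j ≠ i} =>
        ((X (BNode.u j.1) ω, X (BNode.z j.1) ω, X (BNode.y j.1) ω) : ℕ × ℕ × ℕ)) :=
    indep_contract μ t5 t9
  have t11 := indep_comap_left μ Prod.snd t10
  exact indep_comap_right μ
    (fun (o : {j : Fin n // j ∈ C2 ∧ j ≠ i} → ℕ × ℕ × ℕ) => fun j => (o j).2.2) t11

end Aux3


/-- Lemma 7 of the paper: Networks 1 and 2 imply that `(T_i)_{i ∈ C1}` are mutually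
independent and `(T_i)_{i ∈ C2}` are mutually independent, where
`T_i = S((X_i^1,…,X_i^k,Y_i,Z_i); U)`. -/
theorem networks_mutIndep (n k : ℕ) (hn : 2 ≤ n) (hk : 1 ≤ k)
    (C1 C2 : Finset (Fin n)) (hC : Disjoint C1 C2)
    (A : Fin k → Finset (Fin n)) (b : Fin k → Fin n) (hb : ∀ j, b j ∉ A j)
    (Ω : Type) (μ : PMF Ω) (X : BNode n k → Ω → ℕ)
    (hfin : ∀ v, FinSupp μ (X v))
    (h1 : SatisfiesBN μ X (edge1 n k C1))
    (h2 : SatisfiesBN μ X (edge2 n k C2 A b))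
    (β : Fin n → Type) (T : ∀ i, Ω → β i)
    (hT : ∀ i, MinSuffStat μ (tupleVar X i) (Ujoint X) (T i)) :
    MutIndepOn μ T C1 ∧ MutIndepOn μ T C2 := by
  classical
  have hsuff : ∀ i : Fin n, FunDep μ (fun ω => X (BNode.y i) ω) (T i) := by
    intro i
    exact (hT i).2 ℕ (fun ω => X (BNode.y i) ω)
      ⟨⟨fun t => t.2.1, fun ω _ => rfl⟩, Aux3.y_suff μ X hk h1 i⟩
  have hsuff' : ∀ i : Fin n, ∃ f : ℕ → β i,
      ∀ ω ∈ μ.support, T i ω = f (X (BNode.y i) ω) := hsuff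
  choose f hf using hsuff'
  constructor
  · intro i hi
    exact Aux.indep_transfer μ (Aux3.y_indep1 μ X h1 hi) (f i)
      (fun (v : {j : Fin n // j ∈ C1 ∧ j ≠ i} → ℕ) => fun j => f j.1 (v j))
      (fun ω hω => hf i ω hω)
      (fun ω hω => funext fun j => hf j.1 ω hω)
  · intro i hi
    exact Aux.indep_transfer μ (Aux3.y_indep2 μ X h2 hi) (f i)
      (fun (v : {j : Fin n // j ∈ C2 ∧ j ≠ i} → ℕ) => fun j => f j.1 (v j))
      (fun ω hω => hf i ω hω)
      (fun ω hω => funext fun j => hf j.1 ω hω)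

end Paper
end
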